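/- arXiv:1807.10178 — 8 statements merged into one kernel-verified Lean document; each statement's English description precedes it below -/
import Mathlib

section
/- Let S₀ : ℝ → ℝ be measurable, 1-periodic, bounded by M (|S₀(σ)| ≤ M for all σ), and of zero mean (∫₀¹ S₀(σ) dσ = 0). Let f : ℝ → ℝ be Lipschitz with constant L. Let ε > 0, n a positive integer, and w = nε. Then for every t ∈ ℝ, |(1/w) ∫_{t−w}^{t} S₀(τ/ε) f(τ) dτ| ≤ (M L / 2) ε. -/
open MeasureTheory intervalIntegral

/-- Averaging a high-frequency zero-mean periodic signal against a Lipschitz signal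
over a window which is an integer multiple of the period gives an `O(ε)` result. -/
theorem stmt_4 (S₀ : ℝ → ℝ) (hmeas : Measurable S₀)
    (hper : ∀ σ : ℝ, S₀ (σ + 1) = S₀ σ)
    (M : ℝ) (hM : ∀ σ : ℝ, |S₀ σ| ≤ M)
    (hzero : (∫ σ in (0:ℝ)..1, S₀ σ) = 0)
    (f : ℝ → ℝ) (L : ℝ) (hLip : ∀ x y : ℝ, |f x - f y| ≤ L * |x - y|)
    (ε : ℝ) (hε : 0 < ε) (n : ℕ) (hn : 0 < n) (w : ℝ) (hw : w = n * ε) :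
    ∀ t : ℝ, |(1 / w) * ∫ τ in (t - w)..t, S₀ (τ / ε) * f τ| ≤ (M * L / 2) * ε := by
  intro t
  have hM0 : 0 ≤ M := le_trans (abs_nonneg _) (hM 0)
  have hL0 : 0 ≤ L := by
    have h := hLip 1 0
    have h0 : (0:ℝ) ≤ L * |1 - (0:ℝ)| := le_trans (abs_nonneg _) h
    simpa using h0
  have hwpos : 0 < w := by rw [hw]; positivity
  have hfc : Continuous f := by
    have : LipschitzWith (Real.toNNReal L) f := by
      apply LipschitzWith.of_dist_le_mul
      intro x y
      simpa [Real.dist_eq, Real.coe_toNNReal L hL0] using hLip x y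
    exact this.continuous
  have hSm : Measurable fun τ : ℝ => S₀ (τ / ε) := hmeas.comp (measurable_id.div_const ε)
  -- interval integrability of S₀(τ/ε)
  have hInt : ∀ a b : ℝ, IntervalIntegrable (fun τ => S₀ (τ / ε)) volume a b := by
    intro a b
    apply IntervalIntegrable.mono_fun (_root_.intervalIntegrable_const (c := M))
      hSm.aestronglyMeasurable
    filter_upwards with τ
    simpa [Real.norm_eq_abs, abs_of_nonneg hM0] using hM (τ / ε)
  have hIntg : ∀ a b : ℝ, IntervalIntegrable (fun τ => S₀ (τ / ε) * f τ) volume a b :=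
    fun a b => (hInt a b).mul_continuousOn hfc.continuousOn
  -- zero integral over a period
  have hper' : Function.Periodic S₀ 1 := hper
  have hzero' : ∀ a : ℝ, (∫ τ in a..(a + ε), S₀ (τ / ε)) = 0 := by
    intro a
    rw [intervalIntegral.integral_comp_div (c := ε) (f := S₀) hε.ne']
    have h1 : (a + ε) / ε = a / ε + 1 := by field_simp
    rw [h1, hper'.intervalIntegral_add_eq (a / ε) 0, zero_add, hzero, smul_zero]
  -- per-interval estimate
  have hkey : ∀ a : ℝ, |∫ τ in a..(a + ε), S₀ (τ / ε) * f τ| ≤ M * L * ε ^ 2 / 2 := by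
    intro a
    have hab : a ≤ a + ε := by linarith
    have hIa : IntervalIntegrable (fun τ => S₀ (τ / ε) * f a) volume a (a + ε) :=
      (hInt a (a + ε)).mul_const _
    have h1 : (∫ τ in a..(a + ε), S₀ (τ / ε) * f τ)
        = ∫ τ in a..(a + ε), S₀ (τ / ε) * (f τ - f a) := by
      have := intervalIntegral.integral_sub (hIntg a (a + ε)) hIa
      rw [intervalIntegral.integral_mul_const, hzero' a, zero_mul, sub_zero] at this
      rw [← this]
      congr 1; ext τ; ring
    rw [h1]
    have h2 : |∫ τ in a..(a + ε), S₀ (τ / ε) * (f τ - f a)|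
        ≤ ∫ τ in a..(a + ε), |S₀ (τ / ε)| * |f τ - f a| := by
      simpa [Real.norm_eq_abs, abs_mul] using
        intervalIntegral.norm_integral_le_integral_norm (μ := volume)
          (f := fun τ => S₀ (τ / ε) * (f τ - f a)) hab
    have h3 : (∫ τ in a..(a + ε), |S₀ (τ / ε)| * |f τ - f a|)
        ≤ ∫ τ in a..(a + ε), M * L * (τ - a) := by
      apply intervalIntegral.integral_mono_on hab
      · exact (hInt a (a + ε)).abs.mul_continuousOn ((hfc.sub continuous_const).abs).continuousOn
      · exact (Continuous.intervalIntegrable (by continuity) a (a + ε))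
      · intro τ hτ
        have h4 : |f τ - f a| ≤ L * (τ - a) := by
          have := hLip τ a
          rwa [abs_of_nonneg (by linarith [hτ.1] : (0:ℝ) ≤ τ - a)] at this
        calc |S₀ (τ / ε)| * |f τ - f a| ≤ M * (L * (τ - a)) := by
              apply mul_le_mul (hM _) h4 (abs_nonneg _) hM0
          _ = M * L * (τ - a) := by ring
    have h5 : (∫ τ in a..(a + ε), M * L * (τ - a)) = M * L * ε ^ 2 / 2 := by
      rw [intervalIntegral.integral_const_mul]
      have : (∫ τ in a..(a + ε), (τ - a)) = ε ^ 2 / 2 := by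
        rw [intervalIntegral.integral_comp_sub_right (fun x => x) a]
        have e1 : a + ε - a = ε := by ring
        have e2 : a - a = 0 := by ring
        rw [e1, e2, integral_id]
        ring
      rw [this]; ring
    linarith
  -- sum over subintervals
  set g : ℝ → ℝ := fun τ => S₀ (τ / ε) * f τ with hg
  have hsum : (∫ τ in (t - w)..t, g τ)
      = ∑ k ∈ Finset.range n, ∫ τ in (t - w + k * ε)..(t - w + (k + 1) * ε), g τ := by
    have h := intervalIntegral.sum_integral_adjacent_intervals
      (a := fun k : ℕ => t - w + k * ε) (μ := volume) (f := g) (n := n)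
      (fun k _ => hIntg _ _)
    have hnn : t - w + (n : ℝ) * ε = t := by rw [hw]; ring
    simp only [Nat.cast_zero, Nat.cast_add, Nat.cast_one, zero_mul, add_zero] at h
    rw [hnn] at h
    rw [← h]
  have hbound : |∫ τ in (t - w)..t, g τ| ≤ n * (M * L * ε ^ 2 / 2) := by
    rw [hsum]
    calc |∑ k ∈ Finset.range n, ∫ τ in (t - w + k * ε)..(t - w + (k + 1) * ε), g τ|
        ≤ ∑ k ∈ Finset.range n, |∫ τ in (t - w + k * ε)..(t - w + (k + 1) * ε), g τ| :=
          Finset.abs_sum_le_sum_abs _ _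
      _ ≤ ∑ k ∈ Finset.range n, M * L * ε ^ 2 / 2 := by
          apply Finset.sum_le_sum
          intro k _
          have heq : t - w + ((k : ℝ) + 1) * ε = (t - w + k * ε) + ε := by ring
          rw [heq]
          exact hkey _
      _ = n * (M * L * ε ^ 2 / 2) := by simp [Finset.sum_const, mul_comm]
  rw [abs_mul, abs_of_pos (by positivity : (0:ℝ) < 1 / w)]
  have : 1 / w * |∫ τ in (t - w)..t, g τ| ≤ 1 / w * (n * (M * L * ε ^ 2 / 2)) := by
    apply mul_le_mul_of_nonneg_left hbound (by positivity)
  calc 1 / w * |∫ τ in (t - w)..t, g τ| ≤ 1 / w * (n * (M * L * ε ^ 2 / 2)) := this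
    _ = M * L / 2 * ε := by
        rw [hw]
        have hn' : (n : ℝ) ≠ 0 := Nat.cast_ne_zero.mpr hn.ne'
        field_simp
end

section
/- Let Δ : [0,∞) → ℝ be continuous and persistently exciting: there exist T > 0 and δ > 0 with ∫_t^{t+T} Δ(τ)² dτ ≥ δ for all t ≥ 0. Let γ > 0 and let x : [0,∞) → ℝ be differentiable with x'(t) = −γ Δ(t)² x(t). Then for all t ≥ 0, |x(t)| ≤ e^{γδ} · e^{−(γδ/T) t} · |x(0)|; in particular x converges to zero exponentially. -/
/-- Exponential convergence of the DREM error under persistency of excitation: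
if `∫_t^{t+T} Δ² ≥ δ` for all `t ≥ 0` and `x' = −γ Δ(t)² x`, then
`|x(t)| ≤ e^{γδ} e^{−(γδ/T)t} |x(0)|`. -/
theorem stmt_9 (Δ : ℝ → ℝ) (hΔ : Continuous Δ)
    (T δ : ℝ) (hT : 0 < T) (hδ : 0 < δ)
    (hPE : ∀ t : ℝ, 0 ≤ t → δ ≤ ∫ τ in t..(t + T), (Δ τ)^2)
    (γ : ℝ) (hγ : 0 < γ) (x : ℝ → ℝ)
    (hx : ∀ t : ℝ, 0 ≤ t → HasDerivAt x (-γ * (Δ t)^2 * x t) t) :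
    ∀ t : ℝ, 0 ≤ t →
      |x t| ≤ Real.exp (γ * δ) * Real.exp (-(γ * δ / T) * t) * |x 0| := by
  intro t ht
  set f : ℝ → ℝ := fun τ => (Δ τ)^2 with hfdef
  have hfc : Continuous f := hΔ.pow 2
  have hfint : ∀ a b : ℝ, IntervalIntegrable f MeasureTheory.volume a b :=
    fun a b => hfc.intervalIntegrable a b
  set F : ℝ → ℝ := fun s => ∫ τ in (0:ℝ)..s, f τ with hFdef
  have hF : ∀ s : ℝ, HasDerivAt F (f s) s := fun s =>
    intervalIntegral.integral_hasDerivAt_right (hfint 0 s)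
      (hfc.stronglyMeasurableAtFilter _ _) hfc.continuousAt
  -- constancy of x * exp(γ F)
  have key : ∀ s : ℝ, 0 ≤ s → x s * Real.exp (γ * F s) = x 0 := by
    intro s hs
    have hg : ∀ u ∈ Set.Ico (0:ℝ) s,
        HasDerivWithinAt (fun u => x u * Real.exp (γ * F u)) 0 (Set.Ici u) u := by
      intro u hu
      have h1 := hx u hu.1
      have h2 : HasDerivAt (fun u => Real.exp (γ * F u))
          (Real.exp (γ * F u) * (γ * f u)) u := ((hF u).const_mul γ).exp
      have h3 := h1.mul h2
      have h4 : -γ * (Δ u)^2 * x u * Real.exp (γ * F u)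
          + x u * (Real.exp (γ * F u) * (γ * f u)) = 0 := by
        simp only [hfdef]; ring
      rw [h4] at h3
      exact h3.hasDerivWithinAt
    have hcont : ContinuousOn (fun u => x u * Real.exp (γ * F u)) (Set.Icc 0 s) := by
      intro u hu
      exact (((hx u hu.1).continuousAt).mul
        (((hF u).const_mul γ).exp.continuousAt)).continuousWithinAt
    have hc := constant_of_has_deriv_right_zero hcont hg s (Set.mem_Icc.2 ⟨hs, le_rfl⟩)
    simpa [hFdef, intervalIntegral.integral_same] using hc
  -- lower bound on F at multiples of T
  have hFn : ∀ n : ℕ, δ * n ≤ F ((n : ℝ) * T) := by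
    intro n
    induction n with
    | zero => simp [hFdef]
    | succ n ih =>
      have h0 : (0:ℝ) ≤ (n : ℝ) * T := by positivity
      have hstep := hPE ((n : ℝ) * T) h0
      have hadd := intervalIntegral.integral_add_adjacent_intervals
        (hfint 0 ((n : ℝ) * T)) (hfint ((n : ℝ) * T) ((n : ℝ) * T + T))
      have hcast : ((n : ℝ) + 1) * T = (n : ℝ) * T + T := by ring
      push_cast
      rw [hcast]
      have hEq : F ((n : ℝ) * T + T)
          = F ((n : ℝ) * T) + ∫ τ in ((n:ℝ)*T)..((n:ℝ)*T + T), f τ := by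
        simp only [hFdef]; exact hadd.symm
      have hstep' : δ ≤ ∫ τ in ((n:ℝ)*T)..((n:ℝ)*T + T), f τ := hstep
      linarith
  -- F t ≥ δ (t/T - 1)
  set n := ⌊t / T⌋₊ with hn
  have htT : 0 ≤ t / T := by positivity
  have hnT : (n : ℝ) * T ≤ t := by
    have h1 : (n : ℝ) ≤ t / T := Nat.floor_le htT
    calc (n : ℝ) * T ≤ (t / T) * T := by nlinarith
    _ = t := by field_simp
  have hlt : t / T < (n : ℝ) + 1 := Nat.lt_floor_add_one _
  have hFt : F ((n : ℝ) * T) ≤ F t := by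
    have hadd := intervalIntegral.integral_add_adjacent_intervals
      (hfint 0 ((n : ℝ) * T)) (hfint ((n : ℝ) * T) t)
    have hnn : 0 ≤ ∫ τ in ((n:ℝ)*T)..t, f τ :=
      intervalIntegral.integral_nonneg hnT (fun u _ => sq_nonneg _)
    have : F t = F ((n : ℝ) * T) + ∫ τ in ((n:ℝ)*T)..t, f τ := by
      simp only [hFdef]; exact hadd.symm
    linarith
  have hFlb : δ * (t / T - 1) ≤ F t := by
    have h1 : δ * (t / T - 1) ≤ δ * n := by nlinarith
    linarith [hFn n]
  -- explicit solution
  have he : (0:ℝ) < Real.exp (γ * F t) := Real.exp_pos _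
  have hxt : x t = Real.exp (-(γ * F t)) * x 0 := by
    rw [Real.exp_neg]
    field_simp
    linarith [key t ht]
  have habs : |x t| = Real.exp (-(γ * F t)) * |x 0| := by
    rw [hxt, abs_mul, abs_of_pos (Real.exp_pos _)]
  rw [habs, ← Real.exp_add]
  apply mul_le_mul_of_nonneg_right _ (abs_nonneg _)
  apply Real.exp_le_exp.2
  have : γ * δ + -(γ * δ / T) * t = -(γ * (δ * (t / T - 1))) := by
    field_simp; ring
  rw [this]
  have := mul_le_mul_of_nonneg_left hFlb hγ.le
  linarith
end

section
/- Let a : [0,∞) → ℝ be continuous with a(t) ≥ 0 for all t, and suppose there exist T > 0 and μ > 0 such that ∫_t^{t+T} a(τ) dτ ≥ μ for all t ≥ 0. Let x : [0,∞) → ℝ be differentiable and e : [0,∞) → ℝ continuous with x'(t) = −a(t) x(t) + e(t) and |e(t)| ≤ δ for all t ≥ 0. Then for all t ≥ 0, |x(t)| ≤ e^{μ} e^{−(μ/T) t} |x(0)| + δ e^{μ} T / μ; in particular limsup_{t→∞} |x(t)| ≤ δ e^{μ} T / μ. -/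
open Filter

/-- ISS estimate for a scalar LTV system with a persistently exciting nonnegative gain:
if `∫_t^{t+T} a ≥ μ` and `x' = −a(t) x + e(t)` with `|e| ≤ δ`, then
`|x(t)| ≤ e^μ e^{−(μ/T)t}|x(0)| + δ e^μ T/μ`. -/
theorem stmt_10 (a : ℝ → ℝ) (ha : Continuous a) (ha0 : ∀ t : ℝ, 0 ≤ t → 0 ≤ a t)
    (T μ : ℝ) (hT : 0 < T) (hμ : 0 < μ)
    (hPE : ∀ t : ℝ, 0 ≤ t → μ ≤ ∫ τ in t..(t + T), a τ)
    (x e : ℝ → ℝ) (he : Continuous e) (δ : ℝ)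
    (hx : ∀ t : ℝ, 0 ≤ t → HasDerivAt x (-a t * x t + e t) t)
    (heb : ∀ t : ℝ, 0 ≤ t → |e t| ≤ δ) :
    (∀ t : ℝ, 0 ≤ t →
      |x t| ≤ Real.exp μ * Real.exp (-(μ / T) * t) * |x 0| + δ * Real.exp μ * T / μ) ∧
    limsup (fun t : ℝ => |x t|) atTop ≤ δ * Real.exp μ * T / μ := by
  have hc0 : 0 < μ / T := div_pos hμ hT
  set c : ℝ := μ / T with hc
  have hδ : 0 ≤ δ := (abs_nonneg _).trans (heb 0 le_rfl)
  set A : ℝ → ℝ := fun t => ∫ τ in (0:ℝ)..t, a τ with hAdef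
  have hInt : ∀ u v : ℝ, IntervalIntegrable a MeasureTheory.volume u v :=
    fun u v => ha.intervalIntegrable u v
  have hAderiv : ∀ t : ℝ, HasDerivAt A (a t) t := fun t =>
    intervalIntegral.integral_hasDerivAt_right (hInt 0 t)
      (ha.stronglyMeasurableAtFilter _ _) ha.continuousAt
  have hAcont : Continuous A := by
    rw [continuous_iff_continuousAt]; exact fun t => (hAderiv t).continuousAt
  have hsplit : ∀ u v : ℝ, A v - A u = ∫ τ in u..v, a τ := by
    intro u v
    have h := intervalIntegral.integral_add_adjacent_intervals (hInt 0 u) (hInt u v)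
    simp only [hAdef]
    linarith
  -- step lemma
  have hstep : ∀ n : ℕ, ∀ s : ℝ, 0 ≤ s → (n : ℝ) * μ ≤ ∫ τ in s..(s + n * T), a τ := by
    intro n
    induction n with
    | zero => intro s hs; simp
    | succ n ih =>
      intro s hs
      have h1 := ih s hs
      have h2 := hPE (s + n * T) (add_nonneg hs (mul_nonneg (Nat.cast_nonneg n) hT.le))
      have hadd := intervalIntegral.integral_add_adjacent_intervals
        (hInt s (s + n * T)) (hInt (s + n * T) (s + n * T + T))
      have heq : s + ((n : ℕ) + 1 : ℕ) * T = s + n * T + T := by push_cast; ring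
      rw [heq]
      push_cast
      linarith
  -- key growth estimate
  have hkey : ∀ s t : ℝ, 0 ≤ s → s ≤ t → c * (t - s) - μ ≤ A t - A s := by
    intro s t hs hst
    rw [hsplit s t]
    set n := ⌊(t - s) / T⌋₊ with hn
    have hfl0 : (0:ℝ) ≤ (t - s) / T := div_nonneg (by linarith) hT.le
    have hnle : s + n * T ≤ t := by
      have h := Nat.floor_le hfl0
      have h1 : (n : ℝ) * T ≤ ((t - s) / T) * T := by nlinarith
      have h2 : ((t - s) / T) * T = t - s := by field_simp
      linarith
    have h1 := hstep n s hs
    have hsn : (0:ℝ) ≤ s + n * T := add_nonneg hs (mul_nonneg (Nat.cast_nonneg n) hT.le)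
    have h2 : (0:ℝ) ≤ ∫ τ in (s + n * T)..t, a τ := by
      apply intervalIntegral.integral_nonneg hnle
      intro u hu
      exact ha0 u (le_trans hsn hu.1)
    have hadd := intervalIntegral.integral_add_adjacent_intervals
      (hInt s (s + n * T)) (hInt (s + n * T) t)
    have hfl : (t - s) / T < n + 1 := Nat.lt_floor_add_one _
    have h3 : c * (t - s) - μ ≤ (n : ℝ) * μ := by
      have h4 : μ * ((t - s) / T) ≤ μ * (n + 1) := by nlinarith
      have h5 : c * (t - s) = μ * ((t - s) / T) := by rw [hc]; ring
      nlinarith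
    linarith
  have hA0 : A 0 = 0 := by simp [hAdef]
  -- the transformed variable
  set y : ℝ → ℝ := fun t => x t * Real.exp (A t) with hydef
  have hyderiv : ∀ t : ℝ, 0 ≤ t → HasDerivAt y (e t * Real.exp (A t)) t := by
    intro t ht
    have h : HasDerivAt y _ t := (hx t ht).mul ((hAderiv t).exp)
    convert h using 1
    ring
  have hy0 : y 0 = x 0 := by simp [hydef, hA0]
  -- FTC representation
  have hyint : ∀ t : ℝ, 0 ≤ t → y t - y 0 = ∫ s in (0:ℝ)..t, e s * Real.exp (A s) := by
    intro t ht
    refine (intervalIntegral.integral_eq_sub_of_hasDerivAt ?_ ?_).symm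
    · intro s hs
      rw [Set.uIcc_of_le ht] at hs
      exact hyderiv s hs.1
    · exact (he.mul (hAcont.rexp)).intervalIntegrable 0 t
  -- main pointwise bound
  have main : ∀ t : ℝ, 0 ≤ t →
      |x t| ≤ Real.exp μ * Real.exp (-c * t) * |x 0| + δ * Real.exp μ * T / μ := by
    intro t ht
    have hexpc : Continuous fun s : ℝ => Real.exp (c * (s - t)) :=
      Real.continuous_exp.comp (continuous_const.mul (continuous_id.sub continuous_const))
    have hgcont : Continuous fun s : ℝ =>
        δ * Real.exp μ * Real.exp (A t) * Real.exp (c * (s - t)) :=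
      continuous_const.mul hexpc
    have hptwise : ∀ s ∈ Set.Icc (0:ℝ) t,
        |e s * Real.exp (A s)| ≤ δ * Real.exp μ * Real.exp (A t) * Real.exp (c * (s - t)) := by
      intro s hs
      have hAb : A s ≤ A t + μ + c * (s - t) := by
        have := hkey s t hs.1 hs.2
        linarith
      have h1 : Real.exp (A s) ≤ Real.exp (A t + μ + c * (s - t)) := Real.exp_le_exp.2 hAb
      have h2 : |e s * Real.exp (A s)| = |e s| * Real.exp (A s) := by
        rw [abs_mul, abs_of_nonneg (Real.exp_pos _).le]
      rw [h2]
      calc |e s| * Real.exp (A s) ≤ δ * Real.exp (A t + μ + c * (s - t)) := by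
            apply mul_le_mul (heb s hs.1) h1 (Real.exp_pos _).le hδ
        _ = δ * Real.exp μ * Real.exp (A t) * Real.exp (c * (s - t)) := by
            rw [Real.exp_add, Real.exp_add]; ring
    have hintle : |∫ s in (0:ℝ)..t, e s * Real.exp (A s)| ≤
        ∫ s in (0:ℝ)..t, δ * Real.exp μ * Real.exp (A t) * Real.exp (c * (s - t)) := by
      calc |∫ s in (0:ℝ)..t, e s * Real.exp (A s)|
          ≤ ∫ s in (0:ℝ)..t, |e s * Real.exp (A s)| :=
            intervalIntegral.abs_integral_le_integral_abs ht
        _ ≤ _ :=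
            intervalIntegral.integral_mono_on ht
              ((he.mul hAcont.rexp).abs.intervalIntegrable 0 t)
              (hgcont.intervalIntegrable 0 t) hptwise
    have hFder : ∀ s : ℝ, HasDerivAt (fun u => Real.exp (c * (u - t)) / c)
        (Real.exp (c * (s - t))) s := by
      intro s
      have h : HasDerivAt (fun u => Real.exp (c * (u - t)) / c) _ s :=
        (((hasDerivAt_id s).sub_const t).const_mul c).exp.div_const c
      convert h using 1
      field_simp
      rfl
    have hcomp : (∫ s in (0:ℝ)..t, Real.exp (c * (s - t))) =
        Real.exp (c * (t - t)) / c - Real.exp (c * (0 - t)) / c :=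
      intervalIntegral.integral_eq_sub_of_hasDerivAt (fun s _ => hFder s)
        (hexpc.intervalIntegrable 0 t)
    have hcompb : (∫ s in (0:ℝ)..t, Real.exp (c * (s - t))) ≤ 1 / c := by
      rw [hcomp]
      have h1 : Real.exp (c * (t - t)) = 1 := by simp
      rw [h1]
      have h2 := div_nonneg (Real.exp_pos (c * (0 - t))).le hc0.le
      linarith
    have hDpos : (0:ℝ) ≤ δ * Real.exp μ * Real.exp (A t) := by positivity
    have hg_int : (∫ s in (0:ℝ)..t, δ * Real.exp μ * Real.exp (A t) * Real.exp (c * (s - t))) =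
        δ * Real.exp μ * Real.exp (A t) * ∫ s in (0:ℝ)..t, Real.exp (c * (s - t)) :=
      intervalIntegral.integral_const_mul _ _
    have hyb : |y t| ≤ |x 0| + δ * Real.exp μ * Real.exp (A t) * (1 / c) := by
      have hd : |y t - y 0| ≤ δ * Real.exp μ * Real.exp (A t) * (1 / c) := by
        rw [hyint t ht]
        refine hintle.trans ?_
        rw [hg_int]
        exact mul_le_mul_of_nonneg_left hcompb hDpos
      have habs := abs_sub_abs_le_abs_sub (y t) (y 0)
      rw [hy0] at *
      linarith [habs, hd]
    have hcancel : Real.exp (A t) * Real.exp (-(A t)) = 1 := by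
      rw [← Real.exp_add]; simp
    have hxt : |x t| = |y t| * Real.exp (-(A t)) := by
      have : y t * Real.exp (-(A t)) = x t := by
        simp only [hydef]
        rw [mul_assoc, hcancel, mul_one]
      rw [← this, abs_mul, abs_of_pos (Real.exp_pos _)]
    have hAlb : c * t - μ ≤ A t := by
      have := hkey 0 t le_rfl ht
      rw [hA0] at this
      linarith
    have hexpA : Real.exp (-(A t)) ≤ Real.exp μ * Real.exp (-c * t) := by
      rw [← Real.exp_add]
      exact Real.exp_le_exp.2 (by linarith)
    calc |x t| = |y t| * Real.exp (-(A t)) := hxt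
      _ ≤ (|x 0| + δ * Real.exp μ * Real.exp (A t) * (1 / c)) * Real.exp (-(A t)) :=
          mul_le_mul_of_nonneg_right hyb (Real.exp_pos _).le
      _ = |x 0| * Real.exp (-(A t)) + δ * Real.exp μ * (1 / c) := by
          have : δ * Real.exp μ * Real.exp (A t) * (1 / c) * Real.exp (-(A t)) =
              δ * Real.exp μ * (1 / c) * (Real.exp (A t) * Real.exp (-(A t))) := by ring
          rw [add_mul, this, hcancel, mul_one]
      _ ≤ Real.exp μ * Real.exp (-c * t) * |x 0| + δ * Real.exp μ * T / μ := by
          have h1 := mul_le_mul_of_nonneg_left hexpA (abs_nonneg (x 0))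
          have h2 : (1 : ℝ) / c = T / μ := by rw [hc, one_div_div]
          rw [h2]
          have h3 : δ * Real.exp μ * (T / μ) = δ * Real.exp μ * T / μ := by ring
          nlinarith [h1]
  refine ⟨fun t ht => by simpa [neg_mul] using main t ht, ?_⟩
  have htend : Tendsto
      (fun t : ℝ => Real.exp μ * Real.exp (-c * t) * |x 0| + δ * Real.exp μ * T / μ) atTop
      (nhds (Real.exp μ * 0 * |x 0| + δ * Real.exp μ * T / μ)) := by
    have h1 : Tendsto (fun t : ℝ => c * t) atTop atTop :=
      Tendsto.const_mul_atTop hc0 tendsto_id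
    have h2 : Tendsto (fun t : ℝ => Real.exp (-c * t)) atTop (nhds 0) := by
      exact (Real.tendsto_exp_neg_atTop_nhds_zero.comp h1).congr fun t => by
        simp [Function.comp, neg_mul]
    have h3 := (h2.const_mul (Real.exp μ)).mul_const |x 0|
    exact h3.add tendsto_const_nhds
  have hev : (fun t : ℝ => |x t|) ≤ᶠ[atTop]
      fun t => Real.exp μ * Real.exp (-c * t) * |x 0| + δ * Real.exp μ * T / μ := by
    filter_upwards [eventually_ge_atTop (0:ℝ)] with t ht using main t ht
  have hcob : IsCoboundedUnder (· ≤ ·) atTop (fun t : ℝ => |x t|) := by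
    exact Filter.IsBoundedUnder.isCoboundedUnder_le
      ⟨0, Filter.eventually_map.2 (Filter.Eventually.of_forall fun t => abs_nonneg (x t))⟩
  have hbd : IsBoundedUnder (· ≤ ·) atTop
      (fun t : ℝ => Real.exp μ * Real.exp (-c * t) * |x 0| + δ * Real.exp μ * T / μ) :=
    htend.isBoundedUnder_le
  have h1 := limsup_le_limsup hev hcob hbd
  rw [htend.limsup_eq] at h1
  simpa using h1
end

section
/- Let S₀ : ℝ → ℝ be continuous and 1-periodic with δ₀ := ∫₀¹ S₀(σ)² dσ > 0. Let ε ∈ (0,1), γ⋆ > 0, and set γ := γ⋆/ε. Let θ̃ : [0,∞) → ℝ be differentiable with θ̃'(t) = −γ S₀(t/ε)² θ̃(t) + γ d₁(t) + d₂(t), where d₁, d₂ are continuous with |d₁(t)| ≤ c₁ ε² and |d₂(t)| ≤ c₂ ε for all t ≥ 0. Then for all t ≥ 0, |θ̃(t)| ≤ e^{γ⋆δ₀} e^{−(γ⋆δ₀/ε) t} |θ̃(0)| + e^{γ⋆δ₀} (γ⋆ c₁ + c₂) ε² / (γ⋆ δ₀); in particular limsup_{t→∞} |θ̃(t)| ≤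 e^{γ⋆δ₀} (γ⋆ c₁ + c₂) ε² / (γ⋆ δ₀) = O(ε²). -/
open Filter Topology

lemma per_lb_aux (S₀ : ℝ → ℝ) (hS : Continuous S₀) (hSper : ∀ t : ℝ, S₀ (t + 1) = S₀ t)
    (δ₀ : ℝ) (hδ₀ : δ₀ = ∫ σ in (0:ℝ)..1, (S₀ σ)^2)
    (u v : ℝ) (huv : u ≤ v) :
    δ₀ * (v - u) - δ₀ ≤ ∫ σ in u..v, (S₀ σ)^2 := by
  have hper : Function.Periodic (fun σ => (S₀ σ)^2) 1 := fun t => by simp [hSper t]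
  have hcont : Continuous fun σ => (S₀ σ)^2 := hS.pow 2
  have hint : ∀ t₁ t₂ : ℝ, IntervalIntegrable (fun σ => (S₀ σ)^2) MeasureTheory.volume t₁ t₂ :=
    fun t₁ t₂ => hcont.intervalIntegrable t₁ t₂
  set n : ℤ := ⌊v - u⌋ with hn
  have hn0 : 0 ≤ n := Int.le_floor.2 (by exact_mod_cast sub_nonneg.2 huv)
  have hle : u + n • (1:ℝ) ≤ v := by
    have := Int.floor_le (v - u)
    push_cast [zsmul_eq_mul]
    linarith
  have hsplit : ∫ σ in u..v, (S₀ σ)^2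
      = (∫ σ in u..u + n • (1:ℝ), (S₀ σ)^2) + ∫ σ in u + n • (1:ℝ)..v, (S₀ σ)^2 :=
    (intervalIntegral.integral_add_adjacent_intervals (hint _ _) (hint _ _)).symm
  have h1 : ∫ σ in u..u + n • (1:ℝ), (S₀ σ)^2 = n • ∫ σ in u..u+1, (S₀ σ)^2 :=
    hper.intervalIntegral_add_zsmul_eq n u hint
  have h2 : ∫ σ in u..u+1, (S₀ σ)^2 = δ₀ := by
    rw [hδ₀, hper.intervalIntegral_add_eq u 0, zero_add]
  have h3 : 0 ≤ ∫ σ in u + n • (1:ℝ)..v, (S₀ σ)^2 :=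
    intervalIntegral.integral_nonneg hle (fun x _ => sq_nonneg _)
  have hδ₀nn : 0 ≤ δ₀ := by
    rw [hδ₀]
    exact intervalIntegral.integral_nonneg (by norm_num) (fun x _ => sq_nonneg _)
  have h4 : δ₀ * (v - u) - δ₀ ≤ (n : ℝ) * δ₀ := by
    have := Int.lt_floor_add_one (v - u)
    nlinarith
  rw [hsplit, h1, h2]
  simp only [zsmul_eq_mul] at h3 ⊢
  linarith

/-- Error estimate for the DREM-based virtual-output estimator: the error `θ̃` of
`θ̃' = −γ S₀(t/ε)² θ̃ + γ d₁ + d₂` with `γ = γ⋆/ε`, `|d₁| ≤ c₁ ε²`, `|d₂| ≤ c₂ ε`,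
converges exponentially to an `O(ε²)` neighborhood of zero. -/
theorem stmt_11 (S₀ : ℝ → ℝ) (hS : Continuous S₀) (hSper : ∀ t : ℝ, S₀ (t + 1) = S₀ t)
    (δ₀ : ℝ) (hδ₀ : δ₀ = ∫ σ in (0:ℝ)..1, (S₀ σ)^2) (hδ₀pos : 0 < δ₀)
    (ε : ℝ) (hε : ε ∈ Set.Ioo (0:ℝ) 1) (γs γ : ℝ) (hγs : 0 < γs) (hγ : γ = γs / ε)
    (θ d₁ d₂ : ℝ → ℝ) (hd₁c : Continuous d₁) (hd₂c : Continuous d₂)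
    (c₁ c₂ : ℝ)
    (hd₁ : ∀ t : ℝ, 0 ≤ t → |d₁ t| ≤ c₁ * ε^2)
    (hd₂ : ∀ t : ℝ, 0 ≤ t → |d₂ t| ≤ c₂ * ε)
    (hθ : ∀ t : ℝ, 0 ≤ t →
      HasDerivAt θ (-γ * (S₀ (t / ε))^2 * θ t + γ * d₁ t + d₂ t) t) :
    (∀ t : ℝ, 0 ≤ t →
      |θ t| ≤ Real.exp (γs * δ₀) * Real.exp (-(γs * δ₀ / ε) * t) * |θ 0| +
        Real.exp (γs * δ₀) * (γs * c₁ + c₂) * ε^2 / (γs * δ₀)) ∧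
    limsup (fun t : ℝ => |θ t|) atTop ≤
      Real.exp (γs * δ₀) * (γs * c₁ + c₂) * ε^2 / (γs * δ₀) := by
  obtain ⟨hε0, hε1⟩ := hε
  have hεne : ε ≠ 0 := ne_of_gt hε0
  have hγpos : 0 < γ := hγ ▸ div_pos hγs hε0
  have hγε : γ * ε = γs := by rw [hγ]; field_simp
  set lam : ℝ := γs * δ₀ / ε with hlam
  have hlampos : 0 < lam := div_pos (mul_pos hγs hδ₀pos) hε0
  set K : ℝ := Real.exp (γs * δ₀) with hK
  have hKpos : 0 < K := Real.exp_pos _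
  set a : ℝ → ℝ := fun t => γ * (S₀ (t / ε))^2 with ha
  have hacont : Continuous a :=
    continuous_const.mul ((hS.comp (continuous_id.div_const ε)).pow 2)
  set A : ℝ → ℝ := fun t => ∫ s in (0:ℝ)..t, a s with hA
  have hAderiv : ∀ t : ℝ, HasDerivAt A (a t) t :=
    fun t => (hacont.integral_hasStrictDerivAt 0 t).hasDerivAt
  have hAcont : Continuous A :=
    continuous_iff_continuousAt.2 fun t => (hAderiv t).continuousAt
  have hA0 : A 0 = 0 := intervalIntegral.integral_same
  -- key excitation estimate
  have hAdiff : ∀ s t : ℝ, s ≤ t → lam * (t - s) - γs * δ₀ ≤ A t - A s := by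
    intro s t hst
    have h1 : A t - A s = ∫ τ in s..t, a τ := by
      have := intervalIntegral.integral_add_adjacent_intervals
        (hacont.intervalIntegrable (μ := MeasureTheory.volume) 0 s)
        (hacont.intervalIntegrable (μ := MeasureTheory.volume) s t)
      simp only [hA]
      linarith [this]
    have h2 : (∫ τ in s..t, a τ) = γ * (ε * ∫ σ in s/ε..t/ε, (S₀ σ)^2) := by
      rw [show (∫ τ in s..t, a τ) = γ * ∫ τ in s..t, (S₀ (τ / ε))^2 from
        intervalIntegral.integral_const_mul γ _]
      rw [intervalIntegral.integral_comp_div (fun σ => (S₀ σ)^2) hεne]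
      simp [smul_eq_mul]
    have hst' : s / ε ≤ t / ε := (div_le_div_iff_of_pos_right hε0).2 hst
    have hI := per_lb_aux S₀ hS hSper δ₀ hδ₀ (s/ε) (t/ε) hst'
    have key : lam * (t - s) - γs * δ₀ = (γ * ε) * (δ₀ * (t/ε - s/ε) - δ₀) := by
      rw [hγε, hlam]; field_simp
    calc lam * (t - s) - γs * δ₀ = (γ * ε) * (δ₀ * (t/ε - s/ε) - δ₀) := key
      _ ≤ (γ * ε) * ∫ σ in s/ε..t/ε, (S₀ σ)^2 := by
          apply mul_le_mul_of_nonneg_left hI (le_of_lt (mul_pos hγpos hε0))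
      _ = A t - A s := by rw [h1, h2]; ring
  have hexp : ∀ s t : ℝ, s ≤ t → Real.exp (A s - A t) ≤ K * Real.exp (-lam * (t - s)) := by
    intro s t hst
    rw [hK, ← Real.exp_add]
    apply Real.exp_le_exp.2
    have := hAdiff s t hst
    linarith
  -- Grönwall via the integrating factor exp (A t)
  set h : ℝ → ℝ := fun s => (γ * d₁ s + d₂ s) * Real.exp (A s) with hh
  have hcontH : Continuous h :=
    ((continuous_const.mul hd₁c).add hd₂c).mul (Real.continuous_exp.comp hAcont)
  have hg : ∀ s : ℝ, 0 ≤ s → HasDerivAt (fun τ => θ τ * Real.exp (A τ)) (h s) s := by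
    intro s hs
    have h1 := (hθ s hs).mul ((hAderiv s).exp)
    refine h1.congr_deriv ?_
    show _ = (γ * d₁ s + d₂ s) * Real.exp (A s)
    simp only [ha]
    ring
  have hFTC : ∀ t : ℝ, 0 ≤ t →
      θ t * Real.exp (A t) = θ 0 + ∫ s in (0:ℝ)..t, h s := by
    intro t ht
    have := intervalIntegral.integral_eq_sub_of_hasDerivAt
      (f := fun τ => θ τ * Real.exp (A τ)) (f' := h)
      (fun x hx => by
        rw [Set.uIcc_of_le ht] at hx
        exact hg x hx.1)
      (hcontH.intervalIntegrable 0 t)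
    rw [this]
    simp only [hA0, Real.exp_zero, mul_one]
    ring
  set M : ℝ := γ * (c₁ * ε^2) + c₂ * ε with hM
  have hc₁ : 0 ≤ c₁ * ε^2 := le_trans (abs_nonneg _) (hd₁ 0 le_rfl)
  have hc₂ : 0 ≤ c₂ * ε := le_trans (abs_nonneg _) (hd₂ 0 le_rfl)
  have hMnn : 0 ≤ M := add_nonneg (mul_nonneg hγpos.le hc₁) hc₂
  -- pointwise bound on h
  have hptw : ∀ t : ℝ, 0 ≤ t → ∀ s ∈ Set.Icc (0:ℝ) t,
      |h s| ≤ (M * K * Real.exp (A t)) * Real.exp (-lam * (t - s)) := by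
    intro t ht s hs
    have hbd : |γ * d₁ s + d₂ s| ≤ M := by
      calc |γ * d₁ s + d₂ s| ≤ |γ * d₁ s| + |d₂ s| := abs_add_le _ _
        _ ≤ γ * (c₁ * ε^2) + c₂ * ε := by
            rw [abs_mul, abs_of_pos hγpos]
            exact add_le_add (mul_le_mul_of_nonneg_left (hd₁ s hs.1) hγpos.le) (hd₂ s hs.1)
    have hAs : Real.exp (A s) ≤ K * Real.exp (-lam * (t - s)) * Real.exp (A t) := by
      have := hexp s t hs.2
      have hEt : (0:ℝ) < Real.exp (A t) := Real.exp_pos _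
      calc Real.exp (A s) = Real.exp (A s - A t) * Real.exp (A t) := by
            rw [← Real.exp_add]; ring_nf
        _ ≤ (K * Real.exp (-lam * (t - s))) * Real.exp (A t) :=
            mul_le_mul_of_nonneg_right this hEt.le
    calc |h s| = |γ * d₁ s + d₂ s| * Real.exp (A s) := by
          rw [hh]; rw [abs_mul, abs_of_pos (Real.exp_pos _)]
      _ ≤ M * (K * Real.exp (-lam * (t - s)) * Real.exp (A t)) := by
          apply mul_le_mul hbd hAs (Real.exp_pos _).le hMnn
      _ = (M * K * Real.exp (A t)) * Real.exp (-lam * (t - s)) := by ring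
  -- integral of the exponential kernel
  have hkernel : ∀ t : ℝ, 0 ≤ t →
      (∫ s in (0:ℝ)..t, Real.exp (-lam * (t - s))) ≤ 1 / lam := by
    intro t ht
    have hprim : ∀ s : ℝ, HasDerivAt (fun s => Real.exp (-lam * (t - s)) / lam)
        (Real.exp (-lam * (t - s))) s := by
      intro s
      have h1 : HasDerivAt (fun s : ℝ => -lam * (t - s)) lam s := by
        have := ((hasDerivAt_id s).const_sub t).const_mul (-lam)
        exact this.congr_deriv (by ring)
      have h2 := h1.exp
      have h3 := h2.div_const lam
      exact h3.congr_deriv (by field_simp)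
    have heq : (∫ s in (0:ℝ)..t, Real.exp (-lam * (t - s)))
        = Real.exp (-lam * (t - t)) / lam - Real.exp (-lam * (t - 0)) / lam := by
      apply intervalIntegral.integral_eq_sub_of_hasDerivAt (fun x _ => hprim x)
      apply Continuous.intervalIntegrable
      exact Real.continuous_exp.comp (continuous_const.mul (continuous_const.sub continuous_id))
    rw [heq]
    have : (0:ℝ) < Real.exp (-lam * (t - 0)) / lam :=
      div_pos (Real.exp_pos _) hlampos
    simp only [sub_self, mul_zero, Real.exp_zero]
    linarith
  -- the main pointwise estimate
  have main : ∀ t : ℝ, 0 ≤ t →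
      |θ t| ≤ K * Real.exp (-lam * t) * |θ 0| + M * K / lam := by
    intro t ht
    have hEt : (0:ℝ) < Real.exp (A t) := Real.exp_pos _
    have hIbound : |∫ s in (0:ℝ)..t, h s| ≤ M * K * Real.exp (A t) / lam := by
      calc |∫ s in (0:ℝ)..t, h s| ≤ ∫ s in (0:ℝ)..t, |h s| :=
            intervalIntegral.abs_integral_le_integral_abs ht
        _ ≤ ∫ s in (0:ℝ)..t, (M * K * Real.exp (A t)) * Real.exp (-lam * (t - s)) := by
            apply intervalIntegral.integral_mono_on ht
              (hcontH.abs.intervalIntegrable 0 t)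
              ((continuous_const.mul (Real.continuous_exp.comp
                (continuous_const.mul (continuous_const.sub continuous_id)))).intervalIntegrable 0 t)
            exact hptw t ht
        _ = (M * K * Real.exp (A t)) * ∫ s in (0:ℝ)..t, Real.exp (-lam * (t - s)) :=
            intervalIntegral.integral_const_mul _ _
        _ ≤ (M * K * Real.exp (A t)) * (1 / lam) := by
            apply mul_le_mul_of_nonneg_left (hkernel t ht)
            positivity
        _ = M * K * Real.exp (A t) / lam := by ring
    have e2 : |θ t| * Real.exp (A t) ≤ |θ 0| + M * K * Real.exp (A t) / lam := by
      have : |θ t| * Real.exp (A t) = |θ t * Real.exp (A t)| := by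
        rw [abs_mul, abs_of_pos hEt]
      rw [this, hFTC t ht]
      exact (abs_add_le _ _).trans (add_le_add_right hIbound _)
    have e3 : |θ t| ≤ |θ 0| * Real.exp (-(A t)) + M * K / lam := by
      rw [← mul_le_mul_iff_left₀ hEt]
      have h' : (|θ 0| * Real.exp (-(A t)) + M * K / lam) * Real.exp (A t)
          = |θ 0| + M * K * Real.exp (A t) / lam := by
        rw [Real.exp_neg]
        field_simp
      rw [h']
      exact e2
    have e4 : Real.exp (-(A t)) ≤ K * Real.exp (-lam * t) := by
      have := hexp 0 t ht
      rw [hA0] at this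
      simpa using this
    calc |θ t| ≤ |θ 0| * Real.exp (-(A t)) + M * K / lam := e3
      _ ≤ |θ 0| * (K * Real.exp (-lam * t)) + M * K / lam := by
          have := mul_le_mul_of_nonneg_left e4 (abs_nonneg (θ 0))
          linarith
      _ = K * Real.exp (-lam * t) * |θ 0| + M * K / lam := by ring
  have hMKlam : M * K / lam = K * (γs * c₁ + c₂) * ε^2 / (γs * δ₀) := by
    rw [hM, hlam, hγ]
    field_simp
  have part1 : ∀ t : ℝ, 0 ≤ t →
      |θ t| ≤ Real.exp (γs * δ₀) * Real.exp (-(γs * δ₀ / ε) * t) * |θ 0| +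
        Real.exp (γs * δ₀) * (γs * c₁ + c₂) * ε^2 / (γs * δ₀) := by
    intro t ht
    have := main t ht
    rw [hMKlam] at this
    calc |θ t| ≤ K * Real.exp (-lam * t) * |θ 0| + K * (γs * c₁ + c₂) * ε^2 / (γs * δ₀) := this
      _ = Real.exp (γs * δ₀) * Real.exp (-(γs * δ₀ / ε) * t) * |θ 0| +
          Real.exp (γs * δ₀) * (γs * c₁ + c₂) * ε^2 / (γs * δ₀) := by
          rw [hK, hlam]
  refine ⟨part1, ?_⟩
  set C : ℝ := Real.exp (γs * δ₀) * (γs * c₁ + c₂) * ε^2 / (γs * δ₀) with hC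
  set f : ℝ → ℝ := fun t => Real.exp (γs * δ₀) * Real.exp (-(γs * δ₀ / ε) * t) * |θ 0| + C with hf
  have htend : Tendsto f atTop (𝓝 C) := by
    have h1 : Tendsto (fun t : ℝ => -(γs * δ₀ / ε) * t) atTop atBot :=
      (tendsto_const_mul_atBot_of_neg (neg_lt_zero.2 (by positivity))).2 tendsto_id
    have h2 : Tendsto (fun t : ℝ => Real.exp (-(γs * δ₀ / ε) * t)) atTop (𝓝 0) :=
      Real.tendsto_exp_atBot.comp h1
    have h3 := ((h2.const_mul (Real.exp (γs * δ₀))).mul_const |θ 0|).add_const C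
    simpa [hf, mul_assoc] using h3
  have hev : (fun t : ℝ => |θ t|) ≤ᶠ[atTop] f :=
    eventually_atTop.2 ⟨0, fun t ht => part1 t ht⟩
  have hb2 : IsCoboundedUnder (· ≤ ·) atTop (fun t : ℝ => |θ t|) :=
    IsBoundedUnder.isCoboundedUnder_le
      ⟨0, eventually_map.2 (Eventually.of_forall fun t => abs_nonneg _)⟩
  calc limsup (fun t : ℝ => |θ t|) atTop ≤ limsup f atTop :=
      limsup_le_limsup hev hb2 htend.isBoundedUnder_le
    _ = C := htend.limsup_eq
end

section
/- Let S₀ : ℝ → ℝ be continuous, 1-periodic, bounded by M, with δ₀ := ∫₀¹ S₀(σ)² dσ > 0. Let ε ∈ (0,1), γ⋆ > 0, γ := γ⋆/ε, and S(t) := S₀(t/ε). Let y_v : ℝ → ℝ be Lipschitz with constant c_v, and suppose Y : [0,∞) → ℝ satisfies Y(t) = S(t) ε y_v(t − ε) + r(t) with |r(t)| ≤ C ε² for all t. Let θ̂₂ : [0,∞) → ℝ be differentiable with θ̂₂'(t) = γ S(t) (Y(t) − S(t) θ̂₂(t)), and define ŷ_v(t) := θ̂₂(t)/ε. Then limsup_{t→∞}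 |ŷ_v(t) − y_v(t)| ≤ e^{γ⋆δ₀} (γ⋆ (M² c_v + M C) + c_v) ε / (γ⋆ δ₀), i.e. the virtual-output estimation error is ultimately O(ε), with exponential convergence to this neighborhood. -/
open Filter MeasureTheory intervalIntegral Topology

lemma aux_per (f : ℝ → ℝ) (hc : Continuous f) (hper : Function.Periodic f 1)
    (hnn : ∀ x, 0 ≤ f x) {a b : ℝ} (hab : a ≤ b) :
    (b - a - 1) * (∫ x in (0:ℝ)..1, f x) ≤ ∫ x in a..b, f x := by
  have hint : ∀ t₁ t₂ : ℝ, IntervalIntegrable f volume t₁ t₂ := fun t₁ t₂ =>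
    hc.intervalIntegrable _ _
  set n : ℤ := ⌊b - a⌋ with hn
  have hn0 : (0:ℤ) ≤ n := Int.floor_nonneg.2 (by linarith)
  have hnle : (n : ℝ) ≤ b - a := Int.floor_le _
  have hngt : b - a - 1 < (n : ℝ) := Int.sub_one_lt_floor _
  have h1 : a + n • (1:ℝ) ≤ b := by rw [zsmul_eq_mul, mul_one]; linarith
  have h2 : ∫ x in a..(a + n • (1:ℝ)), f x = n • ∫ x in a..a+1, f x :=
    hper.intervalIntegral_add_zsmul_eq n a hint
  have h3 : ∫ x in a..a+1, f x = ∫ x in (0:ℝ)..1, f x := by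
    simpa using hper.intervalIntegral_add_eq a 0
  have h4 : (∫ x in a..b, f x) = (∫ x in a..(a + n • (1:ℝ)), f x)
      + ∫ x in (a + n • (1:ℝ))..b, f x :=
    (integral_add_adjacent_intervals (hint _ _) (hint _ _)).symm
  have h5 : 0 ≤ ∫ x in (a + n • (1:ℝ))..b, f x :=
    intervalIntegral.integral_nonneg h1 (fun x _ => hnn x)
  have h6 : 0 ≤ ∫ x in (0:ℝ)..1, f x :=
    intervalIntegral.integral_nonneg zero_le_one (fun x _ => hnn x)
  have h7 : (b - a - 1) * (∫ x in (0:ℝ)..1, f x) ≤ (n:ℝ) * ∫ x in (0:ℝ)..1, f x :=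
    mul_le_mul_of_nonneg_right hngt.le h6
  rw [h4, h2, zsmul_eq_mul, h3]
  linarith

set_option maxHeartbeats 1000000 in
/-- Main result on the virtual-output filter: the gradient estimator
`θ̂₂' = γ S (Y − S θ̂₂)`, `ŷ_v = θ̂₂/ε`, with `γ = γ⋆/ε` and the regression
`Y(t) = S(t) ε y_v(t−ε) + O(ε²)`, reconstructs the virtual output `y_v`
up to an ultimate error of order `ε`. -/
theorem stmt_12 (S₀ : ℝ → ℝ) (hS₀c : Continuous S₀) (hSper : ∀ t : ℝ, S₀ (t + 1) = S₀ t)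
    (M : ℝ) (hM : ∀ t : ℝ, |S₀ t| ≤ M)
    (δ₀ : ℝ) (hδ₀ : δ₀ = ∫ σ in (0:ℝ)..1, (S₀ σ)^2) (hδ₀pos : 0 < δ₀)
    (ε : ℝ) (hε : ε ∈ Set.Ioo (0:ℝ) 1) (γs γ : ℝ) (hγs : 0 < γs) (hγ : γ = γs / ε)
    (S : ℝ → ℝ) (hS : ∀ t : ℝ, S t = S₀ (t / ε))
    (y_v : ℝ → ℝ) (c_v : ℝ) (hyv : ∀ a b : ℝ, |y_v a - y_v b| ≤ c_v * |a - b|)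
    (Y r : ℝ → ℝ)
    (hY : ∀ t : ℝ, 0 ≤ t → Y t = S t * (ε * y_v (t - ε)) + r t)
    (C : ℝ) (hr : ∀ t : ℝ, 0 ≤ t → |r t| ≤ C * ε^2)
    (θ : ℝ → ℝ) (hθ : ∀ t : ℝ, 0 ≤ t → HasDerivAt θ (γ * S t * (Y t - S t * θ t)) t)
    (yhat : ℝ → ℝ) (hyhat : ∀ t : ℝ, yhat t = θ t / ε) :
    limsup (fun t : ℝ => |yhat t - y_v t|) atTop ≤
      Real.exp (γs * δ₀) * (γs * (M^2 * c_v + M * C) + c_v) * ε / (γs * δ₀) := by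
  obtain ⟨hε0, hε1⟩ := hε
  have hεne : ε ≠ 0 := ne_of_gt hε0
  have hγpos : 0 < γ := hγ ▸ div_pos hγs hε0
  have hγε : γ * ε = γs := by rw [hγ]; field_simp
  have hM0 : 0 ≤ M := le_trans (abs_nonneg _) (hM 0)
  have hcv0 : 0 ≤ c_v := by
    have h := hyv 1 0
    simp only [sub_zero, abs_one, mul_one] at h
    exact le_trans (abs_nonneg _) h
  have hC0 : 0 ≤ C := by
    have h := hr 0 le_rfl
    nlinarith [abs_nonneg (r 0), pow_pos hε0 2]
  have hScont : Continuous S := by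
    have : S = fun t => S₀ (t / ε) := funext hS
    rw [this]; exact hS₀c.comp (continuous_id.div_const ε)
  have hSb : ∀ u : ℝ, |S u| ≤ M := fun u => by rw [hS]; exact hM _
  -- the quadratic gain Q and its primitive Γf
  set Q : ℝ → ℝ := fun s => γ * S s ^ 2 with hQdef
  have hQcont : Continuous Q := continuous_const.mul (hScont.pow 2)
  have hQnn : ∀ s, 0 ≤ Q s := fun s => mul_nonneg hγpos.le (sq_nonneg _)
  have hQle : ∀ s, Q s ≤ γ * M^2 := fun s => by
    have : S s ^ 2 ≤ M ^ 2 := by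
      rw [← sq_abs]; exact pow_le_pow_left₀ (abs_nonneg _) (hSb s) 2
    exact mul_le_mul_of_nonneg_left this hγpos.le
  set Γf : ℝ → ℝ := fun u => ∫ s in (0:ℝ)..u, Q s with hΓdef
  have hΓd : ∀ u : ℝ, HasDerivAt Γf (Q u) u := fun u =>
    integral_hasDerivAt_right (hQcont.intervalIntegrable _ _)
      (hQcont.stronglyMeasurableAtFilter _ _) hQcont.continuousAt
  have hΓcont : Continuous Γf :=
    continuous_iff_continuousAt.2 fun u => (hΓd u).continuousAt
  have hΓ0 : Γf 0 = 0 := integral_same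
  set lam : ℝ := γs * δ₀ / ε with hlamdef
  have hlam : 0 < lam := div_pos (mul_pos hγs hδ₀pos) hε0
  -- persistence of excitation
  have hPE : ∀ s t : ℝ, s ≤ t → lam * (t - s) - γs * δ₀ ≤ Γf t - Γf s := by
    intro s t hst
    have hsub : Γf t - Γf s = ∫ u in s..t, Q u :=
      integral_interval_sub_left (hQcont.intervalIntegrable _ _)
        (hQcont.intervalIntegrable _ _)
    have hcomp : (∫ u in s..t, Q u) = γ * (ε * ∫ x in s/ε..t/ε, (S₀ x)^2) := by
      have h1 : (∫ u in s..t, Q u) = γ * ∫ u in s..t, (fun x => (S₀ x)^2) (u / ε) := by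
        rw [← intervalIntegral.integral_const_mul]
        apply intervalIntegral.integral_congr
        intro u _
        simp [hQdef, hS u]
      rw [h1, integral_comp_div (fun x => (S₀ x)^2) hεne]
      simp [smul_eq_mul]
    have hper : Function.Periodic (fun x => (S₀ x)^2) 1 := fun x => by simp [hSper x]
    have hab : s/ε ≤ t/ε := (div_le_div_iff_of_pos_right hε0).2 hst
    have haux := aux_per (fun x => (S₀ x)^2) (hS₀c.pow 2) hper (fun x => sq_nonneg _) hab
    rw [← hδ₀] at haux
    have hγε' : γ * ε = γs := hγε
    rw [hsub, hcomp]
    have h2 : (t/ε - s/ε - 1) * δ₀ ≤ ∫ x in s/ε..t/ε, (S₀ x)^2 := haux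
    have h3 : γ * ε * ((t/ε - s/ε - 1) * δ₀) ≤ γ * ε * ∫ x in s/ε..t/ε, (S₀ x)^2 :=
      mul_le_mul_of_nonneg_left h2 (by positivity)
    calc lam * (t - s) - γs * δ₀ = γ * ε * ((t/ε - s/ε - 1) * δ₀) := by
          rw [hlamdef, ← hγε]; field_simp
      _ ≤ γ * ε * ∫ x in s/ε..t/ε, (S₀ x)^2 := h3
      _ = γ * (ε * ∫ x in s/ε..t/ε, (S₀ x)^2) := by ring
  -- exponential integral bound
  have hIexp : ∀ t : ℝ, 0 ≤ t →
      (∫ s in (0:ℝ)..t, Real.exp (Γf s)) ≤ Real.exp (Γf t) * (Real.exp (γs*δ₀) / lam) := by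
    intro t ht
    have hpt : ∀ s ∈ Set.Icc (0:ℝ) t, Real.exp (Γf s) ≤
        Real.exp (Γf t + γs*δ₀ - lam*t) * Real.exp (lam*s) := by
      intro s hs
      rw [← Real.exp_add]
      apply Real.exp_le_exp.2
      have := hPE s t hs.2
      linarith [this]
    have hint1 : IntervalIntegrable (fun s => Real.exp (Γf s)) volume 0 t :=
      (Real.continuous_exp.comp hΓcont).intervalIntegrable _ _
    have hint2 : IntervalIntegrable
        (fun s => Real.exp (Γf t + γs*δ₀ - lam*t) * Real.exp (lam*s)) volume 0 t :=
      (continuous_const.mul (Real.continuous_exp.comp (continuous_const.mul continuous_id))).intervalIntegrable _ _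
    have hmono := integral_mono_on ht hint1 hint2 hpt
    have hexpint : (∫ s in (0:ℝ)..t, Real.exp (lam*s)) = (Real.exp (lam*t) - 1)/lam := by
      have hd : ∀ x ∈ Set.uIcc (0:ℝ) t, HasDerivAt (fun s => Real.exp (lam*s)/lam)
          (Real.exp (lam*x)) x := by
        intro x _
        have h1 : HasDerivAt (fun s : ℝ => lam * s) lam x := by
          simpa using (hasDerivAt_id x).const_mul lam
        have h2 := (h1.exp).div_const lam
        simpa [mul_div_assoc, div_self hlam.ne'] using h2
      have := integral_eq_sub_of_hasDerivAt hd
        ((Real.continuous_exp.comp (continuous_const.mul continuous_id)).intervalIntegrable _ _)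
      simp only [mul_zero, Real.exp_zero] at this
      rw [this]; ring
    rw [intervalIntegral.integral_const_mul, hexpint] at hmono
    calc (∫ s in (0:ℝ)..t, Real.exp (Γf s))
        ≤ Real.exp (Γf t + γs*δ₀ - lam*t) * ((Real.exp (lam*t) - 1)/lam) := hmono
      _ ≤ Real.exp (Γf t + γs*δ₀ - lam*t) * (Real.exp (lam*t)/lam) := by
          apply mul_le_mul_of_nonneg_left _ (Real.exp_nonneg _)
          apply (div_le_div_iff_of_pos_right hlam).2
          linarith
      _ = Real.exp (Γf t) * (Real.exp (γs*δ₀) / lam) := by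
          have harg : Γf t + γs*δ₀ - lam*t + lam*t = Γf t + γs*δ₀ := by ring
          rw [div_eq_mul_inv, div_eq_mul_inv, ← mul_assoc, ← mul_assoc, ← Real.exp_add,
            harg, Real.exp_add]
  -- constants
  set b0 : ℝ := |θ 0|/ε + |y_v 0| + c_v with hb0def
  set K : ℝ := (ε*c_v + γ*M*(C*ε^2)) * (Real.exp (γs*δ₀)/lam) / ε + c_v*ε with hKdef
  have key : ∀ t : ℝ, 0 ≤ t → |yhat t - y_v t| ≤
      Real.exp (γs*δ₀ - lam*t) * (b0 + c_v*t) + K := by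
    intro t ht
    have huIcc : Set.uIcc (0:ℝ) t = Set.Icc 0 t := Set.uIcc_of_le ht
    -- derivative of the weighted state
    have hw : ∀ s ∈ Set.uIcc (0:ℝ) t, HasDerivAt (fun u => Real.exp (Γf u) * θ u)
        (Real.exp (Γf s) * (γ * S s * Y s)) s := by
      intro s hs
      rw [huIcc] at hs
      have h1 := ((hΓd s).exp).mul (hθ s hs.1)
      refine h1.congr_deriv ?_
      simp only [hQdef]
      ring
    -- integrability of the forcing term
    set g : ℝ → ℝ := fun s => Real.exp (Γf s) * (γ * S s * Y s) with hgdef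
    have hθc : ContinuousOn θ (Set.Ioc 0 t) := fun s hs =>
      ((hθ s hs.1.le).continuousAt).continuousWithinAt
    have hgm : AEStronglyMeasurable g (volume.restrict (Set.Ioc 0 t)) := by
      have heq : Set.EqOn (fun s => Real.exp (Γf s) * (deriv θ s + Q s * θ s)) g
          (Set.Ioc 0 t) := by
        intro s hs
        have hd := hθ s hs.1.le
        simp only [hgdef, hd.deriv, hQdef]
        ring
      have hm1 : AEStronglyMeasurable (fun s => Real.exp (Γf s) * (deriv θ s + Q s * θ s))
          (volume.restrict (Set.Ioc 0 t)) := by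
        apply AEStronglyMeasurable.mul
        · exact (Real.continuous_exp.comp hΓcont).aestronglyMeasurable
        · apply AEStronglyMeasurable.add
          · exact (measurable_deriv θ).aestronglyMeasurable.restrict
          · exact (hQcont.aestronglyMeasurable.restrict).mul
              (hθc.aestronglyMeasurable measurableSet_Ioc)
      exact hm1.congr ((ae_restrict_iff' measurableSet_Ioc).2
        (Filter.Eventually.of_forall (fun s hs => heq hs)))
    have hΓle : ∀ s ∈ Set.Icc (0:ℝ) t, Γf s ≤ γ*M^2*t := by
      intro s hs
      have h1 : Γf s ≤ ∫ u in (0:ℝ)..s, γ*M^2 :=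
        integral_mono_on hs.1 (hQcont.intervalIntegrable _ _)
          (intervalIntegrable_const) (fun x _ => hQle x)
      rw [intervalIntegral.integral_const, smul_eq_mul, sub_zero] at h1
      have : s * (γ*M^2) ≤ t * (γ*M^2) :=
        mul_le_mul_of_nonneg_right hs.2 (by positivity)
      linarith
    have hyb : ∀ s ∈ Set.Icc (0:ℝ) t, |y_v (s - ε)| ≤ |y_v 0| + c_v*(t+1) := by
      intro s hs
      have h1 : |y_v (s-ε) - y_v 0| ≤ c_v * |s - ε| := by
        have := hyv (s-ε) 0
        simpa using this
      have h2 : |s - ε| ≤ t + 1 := by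
        rw [abs_le]; constructor <;> [linarith [hs.1]; linarith [hs.2]]
      have h3 : c_v * |s-ε| ≤ c_v * (t+1) := mul_le_mul_of_nonneg_left h2 hcv0
      calc |y_v (s-ε)| ≤ |y_v (s-ε) - y_v 0| + |y_v 0| := by
            have := abs_sub_abs_le_abs_sub (y_v (s-ε)) (y_v 0)
            linarith [abs_sub_abs_le_abs_sub (y_v (s-ε)) (y_v 0)]
        _ ≤ |y_v 0| + c_v*(t+1) := by linarith
    set B : ℝ := Real.exp (γ*M^2*t) * (γ*M^2*(ε*(|y_v 0| + c_v*(t+1))) + γ*M*(C*ε^2))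
      with hBdef
    have hgb : ∀ s ∈ Set.Ioc (0:ℝ) t, ‖g s‖ ≤ B := by
      intro s hs
      have hsIcc : s ∈ Set.Icc (0:ℝ) t := ⟨hs.1.le, hs.2⟩
      have h1 : |γ * S s * Y s| ≤ γ*M^2*(ε*(|y_v 0| + c_v*(t+1))) + γ*M*(C*ε^2) := by
        rw [hY s hs.1.le]
        calc |γ * S s * (S s * (ε * y_v (s - ε)) + r s)|
            ≤ |γ * S s * (S s * (ε * y_v (s - ε)))| + |γ * S s * r s| := by
              rw [show γ * S s * (S s * (ε * y_v (s - ε)) + r s)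
                  = γ * S s * (S s * (ε * y_v (s - ε))) + γ * S s * r s by ring]
              exact abs_add_le _ _
          _ ≤ γ*M^2*(ε*(|y_v 0| + c_v*(t+1))) + γ*M*(C*ε^2) := by
              apply add_le_add
              · rw [abs_mul, abs_mul, abs_mul, abs_mul, abs_of_pos hγpos, abs_of_pos hε0]
                have hy := hyb s hsIcc
                have hSs := hSb s
                have h0y : (0:ℝ) ≤ |y_v (s-ε)| := abs_nonneg _
                calc γ * |S s| * (|S s| * (ε * |y_v (s-ε)|))
                    ≤ γ * M * (M * (ε * (|y_v 0| + c_v*(t+1)))) := by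
                      gcongr <;> first
                        | exact hSb s
                        | exact hyb s hsIcc
                        | positivity
                        | nlinarith [abs_nonneg (y_v 0), hcv0, ht]
                  _ = γ*M^2*(ε*(|y_v 0| + c_v*(t+1))) := by ring
              · rw [abs_mul, abs_mul, abs_of_pos hγpos]
                calc γ * |S s| * |r s| ≤ γ * M * (C*ε^2) := by
                      gcongr <;> first
                        | exact hSb s
                        | exact hr s hs.1.le
                        | positivity
                  _ = γ*M*(C*ε^2) := by ring
      have h2 : Real.exp (Γf s) ≤ Real.exp (γ*M^2*t) := Real.exp_le_exp.2 (hΓle s hsIcc)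
      calc ‖g s‖ = Real.exp (Γf s) * |γ * S s * Y s| := by
            rw [hgdef]; simp [abs_mul, abs_of_pos (Real.exp_pos _)]
        _ ≤ Real.exp (γ*M^2*t) * (γ*M^2*(ε*(|y_v 0| + c_v*(t+1))) + γ*M*(C*ε^2)) := by
            apply mul_le_mul h2 h1 (abs_nonneg _) (Real.exp_nonneg _)
        _ = B := hBdef.symm
    have hgi : IntegrableOn g (Set.Ioc 0 t) volume := by
      apply Integrable.mono' (integrable_const B) hgm
      exact (ae_restrict_iff' measurableSet_Ioc).2 (Filter.Eventually.of_forall hgb)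
    have hgint : IntervalIntegrable g volume 0 t :=
      (intervalIntegrable_iff_integrableOn_Ioc_of_le ht).2 hgi
    -- FTC for the weighted state
    have hftc : ∫ s in (0:ℝ)..t, g s = Real.exp (Γf t) * θ t - θ 0 := by
      have h := integral_eq_sub_of_hasDerivAt hw hgint
      rw [h, hΓ0, Real.exp_zero, one_mul]
    -- auxiliary integral identities
    have hexpQint : IntervalIntegrable (fun s => Real.exp (Γf s) * Q s) volume 0 t :=
      ((Real.continuous_exp.comp hΓcont).mul hQcont).intervalIntegrable _ _
    have hexpint : IntervalIntegrable (fun s => Real.exp (Γf s)) volume 0 t :=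
      (Real.continuous_exp.comp hΓcont).intervalIntegrable _ _
    have hE1 : ∫ s in (0:ℝ)..t, Real.exp (Γf s) * Q s = Real.exp (Γf t) - 1 := by
      have hd : ∀ x ∈ Set.uIcc (0:ℝ) t, HasDerivAt (fun u => Real.exp (Γf u))
          (Real.exp (Γf x) * Q x) x := fun x _ => (hΓd x).exp
      have h := integral_eq_sub_of_hasDerivAt hd hexpQint
      rw [h, hΓ0, Real.exp_zero]
    have hE2 : ∫ s in (0:ℝ)..t, ((t - s) * (Real.exp (Γf s) * Q s) - Real.exp (Γf s))
        = -t := by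
      have hd : ∀ x ∈ Set.uIcc (0:ℝ) t, HasDerivAt (fun u => (t - u) * Real.exp (Γf u))
          ((t - x) * (Real.exp (Γf x) * Q x) - Real.exp (Γf x)) x := by
        intro x _
        have h1 : HasDerivAt (fun u : ℝ => t - u) (-1) x := by
          simpa using (hasDerivAt_id x).const_sub t
        have h2 := h1.mul (hΓd x).exp
        refine h2.congr_deriv ?_
        ring
      have hint : IntervalIntegrable
          (fun x => (t - x) * (Real.exp (Γf x) * Q x) - Real.exp (Γf x)) volume 0 t :=
        (((continuous_const.sub continuous_id).mul
          ((Real.continuous_exp.comp hΓcont).mul hQcont)).sub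
          (Real.continuous_exp.comp hΓcont)).intervalIntegrable _ _
      have h := integral_eq_sub_of_hasDerivAt hd hint
      rw [h, hΓ0, Real.exp_zero]
      ring
    have htQint : IntervalIntegrable (fun s => (t - s) * (Real.exp (Γf s) * Q s)) volume 0 t :=
      ((continuous_const.sub continuous_id).mul
        ((Real.continuous_exp.comp hΓcont).mul hQcont)).intervalIntegrable _ _
    have hE2' : ∫ s in (0:ℝ)..t, (t - s) * (Real.exp (Γf s) * Q s)
        = (∫ s in (0:ℝ)..t, Real.exp (Γf s)) - t := by
      have h := intervalIntegral.integral_sub htQint hexpint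
      rw [hE2] at h
      linarith
    set I : ℝ := ∫ s in (0:ℝ)..t, Real.exp (Γf s) with hIdef
    have hInn : 0 ≤ I := intervalIntegral.integral_nonneg ht (fun x _ => (Real.exp_nonneg _))
    have hIget : t ≤ I := by
      have h1 : (∫ s in (0:ℝ)..t, (1:ℝ)) ≤ I := by
        apply integral_mono_on ht intervalIntegrable_const hexpint
        intro x hx
        have h0 : 0 ≤ Γf x := intervalIntegral.integral_nonneg hx.1 (fun u _ => hQnn u)
        calc (1:ℝ) = Real.exp 0 := Real.exp_zero.symm
          _ ≤ Real.exp (Γf x) := Real.exp_le_exp.2 h0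
      simpa using h1
    have hIle : I ≤ Real.exp (Γf t) * (Real.exp (γs*δ₀) / lam) := hIexp t ht
    -- the key deviation bound
    have hDbound : |(∫ s in (0:ℝ)..t, g s) - (Real.exp (Γf t) - 1) * (ε * y_v (t-ε))|
        ≤ (ε*c_v + γ*M*(C*ε^2)) * I := by
      have hc : (Real.exp (Γf t) - 1) * (ε * y_v (t-ε))
          = ∫ s in (0:ℝ)..t, (Real.exp (Γf s) * Q s) * (ε * y_v (t-ε)) := by
        rw [intervalIntegral.integral_mul_const, hE1]
      rw [hc, ← intervalIntegral.integral_sub hgint (hexpQint.mul_const _)]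
      set φ : ℝ → ℝ := fun s =>
        ε*c_v*((t-s)*(Real.exp (Γf s) * Q s)) + γ*M*(C*ε^2)*Real.exp (Γf s) with hφdef
      have hφc : Continuous φ := by
        rw [hφdef]; fun_prop
      have hb : ∀ᵐ s ∂volume.restrict (Set.uIoc (0:ℝ) t),
          ‖g s - (Real.exp (Γf s) * Q s) * (ε * y_v (t-ε))‖ ≤ φ s := by
        rw [Set.uIoc_of_le ht]
        apply (ae_restrict_iff' measurableSet_Ioc).2
        apply Filter.Eventually.of_forall
        intro s hs
        have h0s : (0:ℝ) ≤ s := hs.1.le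
        have heq : g s - (Real.exp (Γf s) * Q s) * (ε * y_v (t-ε))
            = Real.exp (Γf s) * (Q s * (ε * (y_v (s-ε) - y_v (t-ε))) + γ * S s * r s) := by
          simp only [hgdef, hQdef]
          rw [hY s h0s]
          ring
        rw [heq, Real.norm_eq_abs, abs_mul, abs_of_pos (Real.exp_pos _)]
        have hy : |y_v (s-ε) - y_v (t-ε)| ≤ c_v * (t - s) := by
          have h := hyv (s-ε) (t-ε)
          have habs : |s - ε - (t-ε)| = t - s := by
            rw [show s-ε-(t-ε) = -(t-s) by ring, abs_neg,
              abs_of_nonneg (by linarith [hs.2])]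
          rw [habs] at h
          exact h
        have h1 : |Q s * (ε * (y_v (s-ε) - y_v (t-ε))) + γ * S s * r s|
            ≤ Q s * (ε * (c_v * (t-s))) + γ*M*(C*ε^2) := by
          refine (abs_add_le _ _).trans (add_le_add ?_ ?_)
          · rw [abs_mul, abs_of_nonneg (hQnn s), abs_mul, abs_of_pos hε0]
            exact mul_le_mul_of_nonneg_left
              (mul_le_mul_of_nonneg_left hy hε0.le) (hQnn s)
          · rw [abs_mul, abs_mul, abs_of_pos hγpos]
            calc γ * |S s| * |r s| ≤ γ * M * (C*ε^2) := by
                  have := mul_le_mul (mul_le_mul_of_nonneg_left (hSb s) hγpos.le)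
                    (hr s h0s) (abs_nonneg _) (by positivity)
                  exact this
              _ = γ*M*(C*ε^2) := by ring
        calc Real.exp (Γf s) * |Q s * (ε * (y_v (s-ε) - y_v (t-ε))) + γ * S s * r s|
            ≤ Real.exp (Γf s) * (Q s * (ε * (c_v * (t-s))) + γ*M*(C*ε^2)) :=
              mul_le_mul_of_nonneg_left h1 (Real.exp_nonneg _)
          _ = φ s := by rw [hφdef]; ring
      have hnorm := intervalIntegral.norm_integral_le_abs_of_norm_le hb
        (hφc.intervalIntegrable _ _)
      have hi1 : IntervalIntegrable
          (fun s => ε*c_v*((t-s)*(Real.exp (Γf s) * Q s))) volume 0 t :=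
        Continuous.intervalIntegrable (by fun_prop) _ _
      have hi2 : IntervalIntegrable
          (fun s => γ*M*(C*ε^2)*Real.exp (Γf s)) volume 0 t :=
        Continuous.intervalIntegrable (by fun_prop) _ _
      have hφval : (∫ s in (0:ℝ)..t, φ s) = ε*c_v*(I - t) + γ*M*(C*ε^2)*I := by
        rw [hφdef]
        rw [intervalIntegral.integral_add hi1 hi2,
          intervalIntegral.integral_const_mul, intervalIntegral.integral_const_mul, hE2']
      rw [hφval] at hnorm
      have h0a : 0 ≤ ε*c_v*(I - t) := mul_nonneg (mul_nonneg hε0.le hcv0) (by linarith)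
      have h0b : 0 ≤ γ*M*(C*ε^2)*I := by positivity
      have habs : |ε*c_v*(I - t) + γ*M*(C*ε^2)*I| = ε*c_v*(I - t) + γ*M*(C*ε^2)*I :=
        abs_of_nonneg (by linarith)
      rw [Real.norm_eq_abs, habs] at hnorm
      have hmt : 0 ≤ ε*c_v*t := by positivity
      have he1 : ε*c_v*(I - t) = ε*c_v*I - ε*c_v*t := by ring
      have he2 : (ε*c_v + γ*M*(C*ε^2))*I = ε*c_v*I + γ*M*(C*ε^2)*I := by ring
      linarith [hnorm]
    -- solve for θ t and assemble
    have hθt : θ t = Real.exp (-Γf t) * (θ 0 + ∫ s in (0:ℝ)..t, g s) := by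
      have h1 : Real.exp (Γf t) * θ t = θ 0 + ∫ s in (0:ℝ)..t, g s := by linarith [hftc]
      have h2 := congrArg (fun z => Real.exp (-Γf t) * z) h1
      rw [← mul_assoc, ← Real.exp_add, neg_add_cancel, Real.exp_zero, one_mul] at h2
      exact h2
    have herr : θ t - ε * y_v (t-ε) = Real.exp (-Γf t) * (θ 0 - ε * y_v (t-ε))
        + Real.exp (-Γf t) *
          ((∫ s in (0:ℝ)..t, g s) - (Real.exp (Γf t) - 1) * (ε * y_v (t-ε))) := by
      rw [hθt, Real.exp_neg]
      have hne := (Real.exp_pos (Γf t)).ne'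
      field_simp
      ring
    have hexpneg : Real.exp (-Γf t) ≤ Real.exp (γs*δ₀ - lam*t) := by
      apply Real.exp_le_exp.2
      have h := hPE 0 t ht
      rw [hΓ0] at h
      linarith
    have h1 : |θ t - ε * y_v (t-ε)| ≤ Real.exp (γs*δ₀ - lam*t) * |θ 0 - ε * y_v (t-ε)|
        + (ε*c_v + γ*M*(C*ε^2)) * (Real.exp (γs*δ₀)/lam) := by
      rw [herr]
      refine (abs_add_le _ _).trans (add_le_add ?_ ?_)
      · rw [abs_mul, abs_of_pos (Real.exp_pos _)]
        exact mul_le_mul_of_nonneg_right hexpneg (abs_nonneg _)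
      · rw [abs_mul, abs_of_pos (Real.exp_pos _)]
        have hcc : (0:ℝ) ≤ ε*c_v + γ*M*(C*ε^2) := by positivity
        calc Real.exp (-Γf t) *
              |(∫ s in (0:ℝ)..t, g s) - (Real.exp (Γf t) - 1) * (ε * y_v (t-ε))|
            ≤ Real.exp (-Γf t) * ((ε*c_v + γ*M*(C*ε^2)) * I) :=
              mul_le_mul_of_nonneg_left hDbound (Real.exp_nonneg _)
          _ ≤ Real.exp (-Γf t) * ((ε*c_v + γ*M*(C*ε^2)) *
              (Real.exp (Γf t) * (Real.exp (γs*δ₀)/lam))) :=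
              mul_le_mul_of_nonneg_left
                (mul_le_mul_of_nonneg_left hIle hcc) (Real.exp_nonneg _)
          _ = (ε*c_v + γ*M*(C*ε^2)) * (Real.exp (γs*δ₀)/lam) := by
              rw [Real.exp_neg]
              have hne := (Real.exp_pos (Γf t)).ne'
              field_simp
    have h2 : |yhat t - y_v t| ≤ |θ t - ε*y_v (t-ε)|/ε + c_v * ε := by
      have ha : yhat t - y_v t = (θ t - ε*y_v (t-ε))/ε + (y_v (t-ε) - y_v t) := by
        rw [hyhat t]
        field_simp
        ring
      have hb2 : |y_v (t-ε) - y_v t| ≤ c_v * ε := by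
        have h := hyv (t-ε) t
        have habs : |t - ε - t| = ε := by
          rw [show t-ε-t = -ε by ring, abs_neg, abs_of_pos hε0]
        rw [habs] at h
        exact h
      calc |yhat t - y_v t| = |(θ t - ε*y_v (t-ε))/ε + (y_v (t-ε) - y_v t)| := by rw [ha]
        _ ≤ |(θ t - ε*y_v (t-ε))/ε| + |y_v (t-ε) - y_v t| := abs_add_le _ _
        _ ≤ |θ t - ε*y_v (t-ε)|/ε + c_v*ε := by
            rw [abs_div, abs_of_pos hε0]
            exact add_le_add le_rfl hb2
    have h3 : |θ 0 - ε*y_v (t-ε)| ≤ |θ 0| + ε*(|y_v 0| + c_v*(t+1)) := by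
      have hy := hyb t ⟨ht, le_rfl⟩
      have := mul_le_mul_of_nonneg_left hy hε0.le
      calc |θ 0 - ε*y_v (t-ε)| ≤ |θ 0| + |ε*y_v (t-ε)| := by
            rw [sub_eq_add_neg]
            exact (abs_add_le _ _).trans (by rw [abs_neg])
        _ ≤ |θ 0| + ε*(|y_v 0| + c_v*(t+1)) := by
            rw [abs_mul, abs_of_pos hε0]
            linarith
    have h4 : |θ t - ε*y_v (t-ε)| ≤
        Real.exp (γs*δ₀-lam*t) * (|θ 0| + ε*(|y_v 0|+c_v*(t+1)))
        + (ε*c_v + γ*M*(C*ε^2)) * (Real.exp (γs*δ₀)/lam) :=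
      h1.trans (add_le_add (mul_le_mul_of_nonneg_left h3 (Real.exp_nonneg _)) le_rfl)
    have h5 : |θ t - ε*y_v (t-ε)|/ε ≤
        (Real.exp (γs*δ₀-lam*t) * (|θ 0| + ε*(|y_v 0|+c_v*(t+1)))
        + (ε*c_v + γ*M*(C*ε^2)) * (Real.exp (γs*δ₀)/lam))/ε :=
      (div_le_div_iff_of_pos_right hε0).2 h4
    have h6 : (Real.exp (γs*δ₀-lam*t) * (|θ 0| + ε*(|y_v 0|+c_v*(t+1)))
        + (ε*c_v + γ*M*(C*ε^2)) * (Real.exp (γs*δ₀)/lam))/ε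
        = Real.exp (γs*δ₀-lam*t) * (b0 + c_v*t)
          + (ε*c_v + γ*M*(C*ε^2)) * (Real.exp (γs*δ₀)/lam)/ε := by
      rw [hb0def]
      field_simp
      ring
    rw [hKdef]
    calc |yhat t - y_v t| ≤ |θ t - ε*y_v (t-ε)|/ε + c_v*ε := h2
      _ ≤ Real.exp (γs*δ₀-lam*t) * (b0 + c_v*t)
          + (ε*c_v + γ*M*(C*ε^2)) * (Real.exp (γs*δ₀)/lam)/ε + c_v*ε := by
          rw [h6] at h5
          linarith
      _ = Real.exp (γs*δ₀-lam*t) * (b0 + c_v*t)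
          + ((ε*c_v + γ*M*(C*ε^2)) * (Real.exp (γs*δ₀)/lam)/ε + c_v*ε) := by ring
  -- K is below the claimed bound
  have hd : (0:ℝ) < γs*δ₀ := mul_pos hγs hδ₀pos
  have hδM : δ₀ ≤ M^2 := by
    rw [hδ₀]
    have h := integral_mono_on zero_le_one ((hS₀c.pow 2).intervalIntegrable (μ := volume) 0 1)
      intervalIntegrable_const (fun x _ => by
        show S₀ x ^ 2 ≤ M ^ 2; rw [← sq_abs]; exact pow_le_pow_left₀ (abs_nonneg _) (hM x) 2)
    simpa using h
  have hE1' : (1:ℝ) ≤ Real.exp (γs*δ₀) := by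
    rw [← Real.exp_zero]
    exact Real.exp_le_exp.2 hd.le
  have hKle : K ≤ Real.exp (γs * δ₀) * (γs * (M^2 * c_v + M * C) + c_v) * ε / (γs * δ₀) := by
    rw [hKdef, hlamdef, hγ]
    have hlhs : (ε*c_v + (γs/ε)*M*(C*ε^2)) * (Real.exp (γs*δ₀)/(γs*δ₀/ε))/ε + c_v*ε
        = ((c_v + γs*(M*C)) * Real.exp (γs*δ₀) + c_v*(γs*δ₀)) * ε/(γs*δ₀) := by
      field_simp
    rw [hlhs]
    apply (div_le_div_iff_of_pos_right hd).2
    have hnum : (c_v + γs*(M*C)) * Real.exp (γs*δ₀) + c_v*(γs*δ₀)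
        ≤ Real.exp (γs*δ₀) * (γs*(M^2*c_v + M*C) + c_v) := by
      nlinarith [mul_le_mul_of_nonneg_left hδM (mul_nonneg hγs.le hcv0),
        mul_le_mul_of_nonneg_left hE1'
          (mul_nonneg (mul_nonneg hγs.le (sq_nonneg M)) hcv0)]
    exact mul_le_mul_of_nonneg_right hnum hε0.le
  -- the transient vanishes at infinity
  have hVt : Tendsto (fun t => Real.exp (γs*δ₀ - lam*t)*(b0 + c_v*t)) atTop (𝓝 0) := by
    have ha : (fun t => Real.exp (γs*δ₀ - lam*t)*(b0 + c_v*t))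
        = fun t => Real.exp (γs*δ₀) * (b0 * Real.exp (-(lam*t))
          + c_v * (t * Real.exp (-(lam*t)))) := by
      funext u
      rw [sub_eq_add_neg, Real.exp_add]
      ring
    rw [ha]
    have h1 : Tendsto (fun u : ℝ => lam*u) atTop atTop :=
      tendsto_id.const_mul_atTop hlam
    have h2 : Tendsto (fun u : ℝ => Real.exp (-(lam*u))) atTop (𝓝 0) :=
      Real.tendsto_exp_atBot.comp (tendsto_neg_atTop_atBot.comp h1)
    have h3 : Tendsto (fun u : ℝ => (lam*u) * Real.exp (-(lam*u))) atTop (𝓝 0) := by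
      have h := Real.tendsto_pow_mul_exp_neg_atTop_nhds_zero 1
      simp only [pow_one] at h
      exact h.comp h1
    have h4 : Tendsto (fun u : ℝ => u * Real.exp (-(lam*u))) atTop (𝓝 0) := by
      have h := h3.const_mul (1/lam)
      simp only [mul_zero] at h
      have heq : (fun u : ℝ => (1/lam) * ((lam*u) * Real.exp (-(lam*u))))
          = fun u : ℝ => u * Real.exp (-(lam*u)) := by
        funext u
        field_simp
      rw [heq] at h
      exact h
    have h5 := ((h2.const_mul b0).add (h4.const_mul c_v)).const_mul (Real.exp (γs*δ₀))
    simpa using h5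
  have hVtend : Tendsto (fun t => Real.exp (γs*δ₀ - lam*t)*(b0 + c_v*t) + K) atTop (𝓝 K) := by
    have h := hVt.add (tendsto_const_nhds (x := K))
    simpa using h
  have hcob : IsCoboundedUnder (· ≤ ·) atTop (fun t : ℝ => |yhat t - y_v t|) := by
    apply Filter.IsBoundedUnder.isCoboundedUnder_le
    exact ⟨0, eventually_map.2 (Filter.Eventually.of_forall fun u => abs_nonneg _)⟩
  have hfV : ∀ᶠ t in atTop, |yhat t - y_v t|
      ≤ Real.exp (γs*δ₀ - lam*t)*(b0 + c_v*t) + K :=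
    eventually_atTop.2 ⟨0, key⟩
  calc limsup (fun t : ℝ => |yhat t - y_v t|) atTop
      ≤ limsup (fun t => Real.exp (γs*δ₀ - lam*t)*(b0 + c_v*t) + K) atTop :=
        limsup_le_limsup hfV hcob hVtend.isBoundedUnder_le
    _ = K := hVtend.limsup_eq
    _ ≤ _ := hKle
end

section
/- Let Φ : [0,∞) → ℝ^{m×q} be continuous with ‖Φ(t)‖ ≤ M for all t, and persistently exciting: there exist T > 0 and δ > 0 such that ∫_t^{t+T} Φ(τ)ᵀ Φ(τ) dτ ⪰ δ I_q (in the Loewner order) for all t ≥ 0. Let γ > 0 and let x : [0,∞) → ℝ^q be differentiable with x'(t) = −γ Φ(t)ᵀ Φ(t) x(t). Then there exist k ≥ 1 and λ > 0, depending only on γ, M, T, δ, such that ‖x(t)‖ ≤ k e^{−λ t} ‖x(0)‖ for all t ≥ 0. -/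
open Matrix
attribute [local instance] Matrix.normedAddCommGroup Matrix.normedSpace

open intervalIntegral MeasureTheory Set

section Aux
variable {m q : ℕ}

private lemma dot_self_nonneg' (v : Fin q → ℝ) : 0 ≤ v ⬝ᵥ v :=
  Finset.sum_nonneg fun i _ => mul_self_nonneg _

private lemma norm_sq_le_dot (v : Fin q → ℝ) : ‖v‖ ^ 2 ≤ v ⬝ᵥ v := by
  rcases isEmpty_or_nonempty (Fin q) with h | h
  · have : v = 0 := Subsingleton.elim _ _
    simp [this]
  · obtain ⟨i, hi⟩ := Finite.exists_max (fun i => ‖v i‖)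
    have h1 : ‖v‖ = ‖v i‖ := le_antisymm (by
      rw [pi_norm_le_iff_of_nonneg (norm_nonneg _)]; exact hi) (norm_le_pi_norm v i)
    rw [h1]
    calc ‖v i‖ ^ 2 = v i * v i := by rw [Real.norm_eq_abs, sq_abs, sq]
    _ ≤ ∑ j, v j * v j :=
        Finset.single_le_sum (f := fun j => v j * v j)
          (fun j _ => mul_self_nonneg _) (Finset.mem_univ i)
    _ = v ⬝ᵥ v := rfl

private lemma dot_le_card_norm_sq (v : Fin q → ℝ) : v ⬝ᵥ v ≤ q * ‖v‖ ^ 2 := by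
  calc v ⬝ᵥ v = ∑ j, v j * v j := rfl
  _ ≤ ∑ _j : Fin q, ‖v‖ ^ 2 := Finset.sum_le_sum fun j _ => by
      have h := norm_le_pi_norm v j
      calc v j * v j = ‖v j‖ ^ 2 := by rw [Real.norm_eq_abs, sq_abs, sq]
      _ ≤ ‖v‖ ^ 2 := by gcongr
  _ = q * ‖v‖ ^ 2 := by simp

private lemma norm_le_sqrt_dot (v : Fin q → ℝ) : ‖v‖ ≤ Real.sqrt (v ⬝ᵥ v) := by
  have := norm_sq_le_dot v
  nlinarith [Real.sq_sqrt (dot_self_nonneg' v), Real.sqrt_nonneg (v ⬝ᵥ v), norm_nonneg v]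

/-- entrywise bound on `mulVec` with sup norms. -/
private lemma mulVec_norm_le (A : Matrix (Fin m) (Fin q) ℝ) {c : ℝ} (hc : 0 ≤ c)
    (hA : ∀ i j, ‖A i j‖ ≤ c) (v : Fin q → ℝ) : ‖A *ᵥ v‖ ≤ q * c * ‖v‖ := by
  rw [pi_norm_le_iff_of_nonneg (by positivity)]
  intro i
  calc ‖(A *ᵥ v) i‖ = ‖∑ j, A i j * v j‖ := rfl
  _ ≤ ∑ j, ‖A i j * v j‖ := norm_sum_le _ _
  _ ≤ ∑ _j : Fin q, c * ‖v‖ := Finset.sum_le_sum fun j _ => by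
      rw [norm_mul]
      exact mul_le_mul (hA i j) (norm_le_pi_norm v j) (norm_nonneg _) hc
  _ = q * c * ‖v‖ := by simp; ring

private lemma hasDerivAt_dot (x : ℝ → Fin q → ℝ) (d : Fin q → ℝ) (t : ℝ)
    (hx : HasDerivAt x d t) :
    HasDerivAt (fun s => x s ⬝ᵥ x s) (2 * (d ⬝ᵥ x t)) t := by
  have hcoord : ∀ i : Fin q, HasDerivAt (fun s => x s i) (d i) t := fun i =>
    ((ContinuousLinearMap.proj (R := ℝ) (φ := fun _ : Fin q => ℝ) i).hasFDerivAt.comp_hasDerivAt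
      t hx)
  have h : HasDerivAt (fun s => ∑ i, x s i * x s i) (∑ i, (d i * x t i + x t i * d i)) t :=
    HasDerivAt.fun_sum fun i _ => (hcoord i).mul (hcoord i)
  convert h using 1
  · rfl
  rw [dotProduct.eq_1, Finset.mul_sum]
  exact Finset.sum_congr rfl fun i _ => by ring

/-- quadratic-form-evaluation as a continuous linear map on matrices -/
private noncomputable def quadCLM (v : Fin q → ℝ) : Matrix (Fin q) (Fin q) ℝ →L[ℝ] ℝ :=
  LinearMap.toContinuousLinearMap
    { toFun := fun A => v ⬝ᵥ (A *ᵥ v)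
      map_add' := fun A B => by rw [add_mulVec, dotProduct_add]
      map_smul' := fun c A => by
        rw [smul_mulVec, dotProduct_smul, smul_eq_mul, RingHom.id_apply,
          smul_eq_mul] }

private lemma pe_applied (Φ : ℝ → Matrix (Fin m) (Fin q) ℝ) (hΦc : Continuous Φ) (T δ t : ℝ)
    (h : ((∫ τ in t..(t + T), (Φ τ)ᵀ * Φ τ) - δ • (1 : Matrix (Fin q) (Fin q) ℝ)).PosSemidef)
    (v : Fin q → ℝ) :
    δ * (v ⬝ᵥ v) ≤ ∫ τ in t..(t + T), (Φ τ *ᵥ v) ⬝ᵥ (Φ τ *ᵥ v) := by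
  have h2 := h.dotProduct_mulVec_nonneg v
  simp only [star_trivial] at h2
  set A := ∫ τ in t..(t + T), (Φ τ)ᵀ * Φ τ with hA
  have hexp : v ⬝ᵥ ((A - δ • 1) *ᵥ v) = v ⬝ᵥ (A *ᵥ v) - δ * (v ⬝ᵥ v) := by
    rw [sub_mulVec, dotProduct_sub, smul_mulVec, one_mulVec, dotProduct_smul]
    simp [smul_eq_mul]
  rw [hexp] at h2
  letI : ENormedAddMonoid (Matrix (Fin q) (Fin q) ℝ) :=
    NormedAddCommGroup.toENormedAddCommMonoid.toENormedAddMonoid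
  have hint : IntervalIntegrable (fun τ => (Φ τ)ᵀ * Φ τ) volume t (t + T) :=
    (hΦc.matrix_transpose.matrix_mul hΦc).intervalIntegrable _ _
  have key : v ⬝ᵥ (A *ᵥ v) = ∫ τ in t..(t + T), (Φ τ *ᵥ v) ⬝ᵥ (Φ τ *ᵥ v) := by
    have hcomm := (quadCLM v).intervalIntegral_comp_comm hint (a := t) (b := t + T)
    have h3 : ∀ B, quadCLM v B = v ⬝ᵥ (B *ᵥ v) := fun B => rfl
    change ∫ x in t..t + T, v ⬝ᵥ (((Φ x)ᵀ * Φ x) *ᵥ v) = v ⬝ᵥ ((∫ x in t..t + T, (Φ x)ᵀ * Φ x) *ᵥ v) at hcomm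
    rw [← hcomm]
    refine intervalIntegral.integral_congr fun τ _ => ?_
    rw [← mulVec_mulVec, dotProduct_mulVec, vecMul_transpose]
  linarith [key ▸ h2]

private lemma contOn_dot {k : ℕ} {s : Set ℝ} {u w : ℝ → Fin k → ℝ}
    (hu : ContinuousOn u s) (hw : ContinuousOn w s) :
    ContinuousOn (fun τ => u τ ⬝ᵥ w τ) s := by
  have heq : (fun τ => u τ ⬝ᵥ w τ) = fun τ => ∑ i, u τ i * w τ i := rfl
  rw [heq]
  exact continuousOn_finset_sum _ fun i _ =>
    (((continuous_apply i).comp_continuousOn hu)).mul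
      (((continuous_apply i).comp_continuousOn hw))

private lemma contOn_mulVec {s : Set ℝ} {Φc : ℝ → Matrix (Fin m) (Fin q) ℝ} {y : ℝ → Fin q → ℝ}
    (hΦ : Continuous Φc) (hy : ContinuousOn y s) :
    ContinuousOn (fun τ => Φc τ *ᵥ y τ) s := by
  refine continuousOn_pi.2 fun i => ?_
  have heq : (fun τ => (Φc τ *ᵥ y τ) i) = fun τ => ∑ j, Φc τ i j * y τ j := rfl
  rw [heq]
  refine continuousOn_finset_sum _ fun j _ => ?_
  exact (((continuous_apply j).comp ((continuous_apply i).comp hΦ)).continuousOn).mul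
    ((continuous_apply j).comp_continuousOn hy)

private lemma dot_sub_sq_le {k : ℕ} (p e : Fin k → ℝ) :
    (p - e) ⬝ᵥ (p - e) ≤ 2 * (p ⬝ᵥ p) + 2 * (e ⬝ᵥ e) := by
  have h := dot_self_nonneg' (p + e)
  have h1 : (p + e) ⬝ᵥ (p + e) = p ⬝ᵥ p + 2 * (p ⬝ᵥ e) + e ⬝ᵥ e := by
    rw [dotProduct_add, add_dotProduct, add_dotProduct, dotProduct_comm e p]; ring
  have h2 : (p - e) ⬝ᵥ (p - e) = p ⬝ᵥ p - 2 * (p ⬝ᵥ e) + e ⬝ᵥ e := by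
    rw [dotProduct_sub, sub_dotProduct, sub_dotProduct, dotProduct_comm e p]; ring
  linarith [h, h1, h2]

end Aux

set_option maxHeartbeats 2000000 in
/-- Uniform exponential stability of the gradient flow `x' = −γ Φ(t)ᵀΦ(t) x`
under persistency of excitation of the bounded regressor `Φ`. -/
theorem stmt_13 {m q : ℕ} (Φ : ℝ → Matrix (Fin m) (Fin q) ℝ) (hΦc : Continuous Φ)
    (M : ℝ) (hM : ∀ t : ℝ, ‖Φ t‖ ≤ M)
    (T δ : ℝ) (hT : 0 < T) (hδ : 0 < δ)
    (hPE : ∀ t : ℝ, 0 ≤ t →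
      ((∫ τ in t..(t + T), (Φ τ)ᵀ * Φ τ) - δ • (1 : Matrix (Fin q) (Fin q) ℝ)).PosSemidef)
    (γ : ℝ) (hγ : 0 < γ) (x : ℝ → (Fin q → ℝ))
    (hx : ∀ t : ℝ, 0 ≤ t →
      HasDerivAt x (-γ • ((Φ t)ᵀ * Φ t).mulVec (x t)) t) :
    ∃ k lam : ℝ, 1 ≤ k ∧ 0 < lam ∧
      ∀ t : ℝ, 0 ≤ t → ‖x t‖ ≤ k * Real.exp (-lam * t) * ‖x 0‖ := by
  -- trivial case `q = 0`
  rcases Nat.eq_zero_or_pos q with hq0 | hq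
  · refine ⟨1, 1, le_refl 1, one_pos, fun t ht => ?_⟩
    subst hq0
    have hxt : x t = 0 := Subsingleton.elim _ _
    have hx0 : x 0 = 0 := Subsingleton.elim _ _
    simp [hxt, hx0]
    positivity
  -- basic constants
  have hM0 : 0 ≤ M := le_trans (norm_nonneg _) (hM 0)
  have hMentry : ∀ τ i j, ‖Φ τ i j‖ ≤ M := fun τ i j =>
    le_trans (norm_entry_le_entrywise_sup_norm (Φ τ)) (hM τ)
  set V : ℝ → ℝ := fun t => x t ⬝ᵥ x t with hV
  set g : ℝ → ℝ := fun τ => (Φ τ *ᵥ x τ) ⬝ᵥ (Φ τ *ᵥ x τ) with hg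
  -- continuity facts
  have hxc : ContinuousOn x (Ici 0) := fun t ht =>
    (hx t ht).continuousAt.continuousWithinAt
  have hgc : ContinuousOn g (Ici 0) :=
    contOn_dot (contOn_mulVec hΦc hxc) (contOn_mulVec hΦc hxc)
  have hVc : ContinuousOn V (Ici 0) := contOn_dot hxc hxc
  have hgnn : ∀ τ, 0 ≤ g τ := fun τ => dot_self_nonneg' _
  have hVnn : ∀ τ, 0 ≤ V τ := fun τ => dot_self_nonneg' _
  -- derivative of V
  have hVd : ∀ t : ℝ, 0 ≤ t → HasDerivAt V (-(2 * γ) * g t) t := by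
    intro t ht
    have hdot : (-γ • (((Φ t)ᵀ * Φ t) *ᵥ x t)) ⬝ᵥ x t = -γ * g t := by
      rw [smul_dotProduct, dotProduct_comm, ← mulVec_mulVec, dotProduct_mulVec,
        vecMul_transpose, smul_eq_mul]
    have h := hasDerivAt_dot x _ t (hx t ht)
    rw [hdot] at h
    have h2 : -(2 * γ) * g t = 2 * (-γ * g t) := by ring
    rw [h2]
    exact h
  -- V is antitone on [0, ∞)
  have hVanti : AntitoneOn V (Ici 0) := by
    apply antitoneOn_of_deriv_nonpos (convex_Ici 0) hVc
    · intro t ht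
      rw [interior_Ici] at ht
      exact (hVd t (le_of_lt ht)).differentiableAt.differentiableWithinAt
    · intro t ht
      rw [interior_Ici] at ht
      rw [(hVd t (le_of_lt ht)).deriv]
      have := hgnn t
      nlinarith
  -- FTC on windows
  have hFTC : ∀ t : ℝ, 0 ≤ t →
      V (t + T) - V t = ∫ τ in t..(t + T), (-(2 * γ) * g τ) := by
    intro t ht
    have hsub : uIcc t (t + T) ⊆ Ici 0 := by
      rw [uIcc_of_le (by linarith)]
      exact fun τ hτ => le_trans ht hτ.1
    refine (intervalIntegral.integral_eq_sub_of_hasDerivAt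
      (fun τ hτ => hVd τ (hsub hτ)) ?_).symm
    apply ContinuousOn.intervalIntegrable
    exact (continuousOn_const.mul (hgc.mono hsub))
  -- constants
  set a : ℝ := ((m : ℝ) + 1) * (M + 1) with ha_def
  set b : ℝ := ((q : ℝ) + 1) * (M + 1) with hb_def
  have ha1 : 1 ≤ a := by have : (0:ℝ) ≤ m := Nat.cast_nonneg m; nlinarith
  have hb1 : 1 ≤ b := by have : (0:ℝ) ≤ q := Nat.cast_nonneg q; nlinarith
  have ha0 : 0 < a := by linarith
  have hb0 : 0 < b := by linarith
  set C : ℝ := T * ((m : ℝ) + 1) * b ^ 2 * γ ^ 2 * a ^ 2 with hC_def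
  set G : ℝ := T * ((m : ℝ) + 1) * b ^ 2 with hG_def
  have hC0 : 0 < C := by
    have : (0:ℝ) < (m : ℝ) + 1 := by positivity
    positivity
  have hG0 : 0 < G := by
    have : (0:ℝ) < (m : ℝ) + 1 := by positivity
    positivity
  set e0 : ℝ := δ / (2 * C * T ^ 2) with he0_def
  have he00 : 0 < e0 := by positivity
  have he0' : 2 * C * e0 * T ^ 2 = δ := by
    rw [he0_def]; field_simp
  set D : ℝ := 2 + C * G / e0 with hD_def
  have hD0 : 0 < D := by positivity
  set cc : ℝ := γ * δ / D with hcc_def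
  have hcc0 : 0 < cc := by positivity
  set ρ : ℝ := max (1 - cc) (1 / 2) with hρ_def
  have hρ0 : 0 < ρ := lt_of_lt_of_le (by norm_num) (le_max_right _ _)
  have hρ1 : ρ < 1 := max_lt (by linarith) (by norm_num)
  clear_value a b C G e0 D cc ρ
  -- the contraction estimate
  have hcontract : ∀ t : ℝ, 0 ≤ t → V (t + T) ≤ ρ * V t := by
    intro t ht
    have htT : t ≤ t + T := by linarith
    have hmemt : t ∈ Ici (0:ℝ) := ht
    have hmemtT : (t + T) ∈ Ici (0:ℝ) := le_trans ht htT
    rcases eq_or_lt_of_le (hVnn t) with hr0 | hr2pos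
    · -- V t = 0
      have h1 := hVanti hmemt hmemtT htT
      have h2 := hVnn (t + T)
      rw [← hr0, mul_zero]
      linarith only [h1, h2, hr0]
    · -- main case: V t > 0
      set v := x t with hv_def
      set r2 := V t with hr2_def
      set r := Real.sqrt r2 with hr_def
      have hr0 : 0 < r := Real.sqrt_pos.2 hr2pos
      have hrsq : r ^ 2 = r2 := Real.sq_sqrt hr2pos.le
      have hIcc : Icc t (t + T) ⊆ Ici (0:ℝ) := fun τ hτ => le_trans ht hτ.1
      have huIcc : uIcc t (t + T) = Icc t (t + T) := uIcc_of_le htT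
      -- integrability staples
      have hgcc : ContinuousOn g (Icc t (t + T)) := hgc.mono hIcc
      have hgint : IntervalIntegrable g volume t (t + T) := by
        apply ContinuousOn.intervalIntegrable; rw [huIcc]; exact hgcc
      have hsqc : ContinuousOn (fun s => Real.sqrt (g s)) (Icc t (t + T)) :=
        Real.continuous_sqrt.comp_continuousOn hgcc
      have hsqint : IntervalIntegrable (fun s => Real.sqrt (g s)) volume t (t + T) := by
        apply ContinuousOn.intervalIntegrable; rw [huIcc]; exact hsqc
      set I := ∫ τ in t..(t + T), g τ with hI_def
      set J := ∫ s in t..(t + T), Real.sqrt (g s) with hJ_def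
      have hI0 : 0 ≤ I := intervalIntegral.integral_nonneg htT fun u _ => hgnn u
      have hJ0 : 0 ≤ J := intervalIntegral.integral_nonneg htT fun u _ => Real.sqrt_nonneg _
      -- uniform bound on the trajectory over the window
      have hxr : ∀ τ ∈ Icc t (t + T), ‖x τ‖ ≤ r := by
        intro τ hτ
        have h1 : V τ ≤ r2 := hVanti hmemt (hIcc hτ) hτ.1
        have h2 : ‖x τ‖ ^ 2 ≤ V τ := norm_sq_le_dot _
        have h3 := Real.sqrt_le_sqrt (le_trans h2 h1)
        rw [Real.sqrt_sq (norm_nonneg _)] at h3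
        rw [hr_def]
        exact h3
      -- matrix action norm bounds
      have hΦv : ∀ (τ : ℝ) (u : Fin q → ℝ), ‖Φ τ *ᵥ u‖ ≤ b * ‖u‖ := by
        intro τ u
        have h1 := mulVec_norm_le (Φ τ) hM0 (hMentry τ) u
        have h2 : (q : ℝ) * M ≤ b := by
          rw [hb_def]; nlinarith only [Nat.cast_nonneg (α := ℝ) q, hM0]
        have h3 := mul_le_mul_of_nonneg_right h2 (norm_nonneg u)
        linarith only [h1, h3]
      have hΦTv : ∀ (τ : ℝ) (u : Fin m → ℝ), ‖(Φ τ)ᵀ *ᵥ u‖ ≤ a * ‖u‖ := by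
        intro τ u
        have h1 := mulVec_norm_le ((Φ τ)ᵀ) hM0 (fun i j => hMentry τ j i) u
        have h2 : (m : ℝ) * M ≤ a := by
          rw [ha_def]; nlinarith only [Nat.cast_nonneg (α := ℝ) m, hM0]
        have h3 := mul_le_mul_of_nonneg_right h2 (norm_nonneg u)
        linarith only [h1, h3]
      -- pointwise bound on g
      have hgle : ∀ τ ∈ Icc t (t + T), g τ ≤ ((m : ℝ) + 1) * (b * r) ^ 2 := by
        intro τ hτ
        have h1 := dot_le_card_norm_sq (Φ τ *ᵥ x τ)
        have hu : ‖Φ τ *ᵥ x τ‖ ≤ b * r :=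
          le_trans (hΦv τ (x τ)) (mul_le_mul_of_nonneg_left (hxr τ hτ) hb0.le)
        have h2 : ‖Φ τ *ᵥ x τ‖ ^ 2 ≤ (b * r) ^ 2 := by
          rw [sq, sq]; exact mul_self_le_mul_self (norm_nonneg _) hu
        have h3 := mul_le_mul_of_nonneg_left h2 (Nat.cast_nonneg (α := ℝ) m)
        linarith only [h1, h3, sq_nonneg (b * r)]
      have hIle : I ≤ G * r2 := by
        calc I ≤ ∫ _τ in t..(t + T), ((m : ℝ) + 1) * (b * r) ^ 2 :=
              intervalIntegral.integral_mono_on htT hgint intervalIntegrable_const hgle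
          _ = T * (((m : ℝ) + 1) * (b * r) ^ 2) := by
              rw [intervalIntegral.integral_const, smul_eq_mul]; ring_nf
          _ = G * r2 := by rw [hG_def, ← hrsq]; ring
      -- bound on the drift of x over the window
      have hd'c : ContinuousOn (fun s => -γ • (((Φ s)ᵀ * Φ s) *ᵥ x s)) (Ici 0) :=
        (contOn_mulVec (hΦc.matrix_transpose.matrix_mul hΦc) hxc).const_smul (-γ)
      have hxdiff : ∀ τ ∈ Icc t (t + T), ‖x τ - v‖ ≤ γ * a * J := by
        intro τ hτ
        obtain ⟨hτ1, hτ2⟩ := hτ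
        have hIccτ : Icc t τ ⊆ Ici (0:ℝ) := fun s hs => le_trans ht hs.1
        have hIccτ' : Icc t τ ⊆ Icc t (t + T) := Icc_subset_Icc le_rfl hτ2
        have hftc : ∫ s in t..τ, -γ • (((Φ s)ᵀ * Φ s) *ᵥ x s) = x τ - x t := by
          apply intervalIntegral.integral_eq_sub_of_hasDerivAt
          · intro s hs
            rw [uIcc_of_le hτ1] at hs
            exact hx s (hIccτ hs)
          · apply ContinuousOn.intervalIntegrable
            apply hd'c.mono
            rw [uIcc_of_le hτ1]
            exact hIccτ
        have hptb : ∀ s ∈ Icc t τ, ‖-γ • (((Φ s)ᵀ * Φ s) *ᵥ x s)‖ ≤ γ * a * Real.sqrt (g s) := by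
          intro s hs
          rw [norm_smul]
          have h1 : ‖(-γ : ℝ)‖ = γ := by rw [Real.norm_eq_abs, abs_neg, abs_of_pos hγ]
          rw [h1, ← mulVec_mulVec]
          have h2 := hΦTv s (Φ s *ᵥ x s)
          have h3 : ‖Φ s *ᵥ x s‖ ≤ Real.sqrt (g s) := norm_le_sqrt_dot _
          have h4 : ‖(Φ s)ᵀ *ᵥ (Φ s *ᵥ x s)‖ ≤ a * Real.sqrt (g s) :=
            le_trans h2 (mul_le_mul_of_nonneg_left h3 ha0.le)
          calc γ * ‖(Φ s)ᵀ *ᵥ (Φ s *ᵥ x s)‖ ≤ γ * (a * Real.sqrt (g s)) :=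
                mul_le_mul_of_nonneg_left h4 hγ.le
            _ = γ * a * Real.sqrt (g s) := by ring
        have hnorm : ‖x τ - x t‖ ≤ ∫ s in t..τ, γ * a * Real.sqrt (g s) := by
          rw [← hftc]
          refine le_trans (intervalIntegral.norm_integral_le_integral_norm hτ1) ?_
          refine intervalIntegral.integral_mono_on hτ1 ?_ ?_ hptb
          · apply ContinuousOn.intervalIntegrable
            apply ContinuousOn.norm
            apply hd'c.mono
            rw [uIcc_of_le hτ1]
            exact hIccτ
          · apply ContinuousOn.intervalIntegrable
            refine continuousOn_const.mul ?_
            apply hsqc.mono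
            rw [uIcc_of_le hτ1]
            exact hIccτ'
        have hJmono : ∫ s in t..τ, γ * a * Real.sqrt (g s) ≤ γ * a * J := by
          rw [intervalIntegral.integral_const_mul, hJ_def]
          refine mul_le_mul_of_nonneg_left ?_ (by positivity)
          exact intervalIntegral.integral_mono_interval le_rfl hτ1 hτ2
            (Filter.Eventually.of_forall fun s => Real.sqrt_nonneg _) hsqint
        calc ‖x τ - v‖ = ‖x τ - x t‖ := by rw [hv_def]
          _ ≤ ∫ s in t..τ, γ * a * Real.sqrt (g s) := hnorm
          _ ≤ γ * a * J := hJmono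
      -- the error integral E
      have hxvc : ContinuousOn (fun τ => x τ - v) (Ici 0) := hxc.sub continuousOn_const
      set ed : ℝ → ℝ := fun τ => (Φ τ *ᵥ (x τ - v)) ⬝ᵥ (Φ τ *ᵥ (x τ - v)) with hed_def
      have hedc : ContinuousOn ed (Ici 0) :=
        contOn_dot (contOn_mulVec hΦc hxvc) (contOn_mulVec hΦc hxvc)
      have hedint : IntervalIntegrable ed volume t (t + T) := by
        apply ContinuousOn.intervalIntegrable; rw [huIcc]; exact hedc.mono hIcc
      set E := ∫ τ in t..(t + T), ed τ with hE_def
      have hE0 : 0 ≤ E := intervalIntegral.integral_nonneg htT fun u _ => dot_self_nonneg' _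
      have hedle : ∀ τ ∈ Icc t (t + T), ed τ ≤ ((m : ℝ) + 1) * (b * (γ * a * J)) ^ 2 := by
        intro τ hτ
        have h1 := dot_le_card_norm_sq (Φ τ *ᵥ (x τ - v))
        have hu : ‖Φ τ *ᵥ (x τ - v)‖ ≤ b * (γ * a * J) :=
          le_trans (hΦv τ (x τ - v)) (mul_le_mul_of_nonneg_left (hxdiff τ hτ) hb0.le)
        have h2 : ‖Φ τ *ᵥ (x τ - v)‖ ^ 2 ≤ (b * (γ * a * J)) ^ 2 := by
          rw [sq, sq]; exact mul_self_le_mul_self (norm_nonneg _) hu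
        have h3 := mul_le_mul_of_nonneg_left h2 (Nat.cast_nonneg (α := ℝ) m)
        linarith only [h1, h3, sq_nonneg (b * (γ * a * J))]
      have hEle : E ≤ C * J ^ 2 := by
        calc E ≤ ∫ _τ in t..(t + T), ((m : ℝ) + 1) * (b * (γ * a * J)) ^ 2 :=
              intervalIntegral.integral_mono_on htT hedint intervalIntegrable_const hedle
          _ = T * (((m : ℝ) + 1) * (b * (γ * a * J)) ^ 2) := by
              rw [intervalIntegral.integral_const, smul_eq_mul]; ring_nf
          _ = C * J ^ 2 := by rw [hC_def, hG_def]; ring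
      -- persistency of excitation lower bound
      have hPEt := pe_applied Φ hΦc T δ t (hPE t ht) v
      have hwint : IntervalIntegrable (fun τ => (Φ τ *ᵥ v) ⬝ᵥ (Φ τ *ᵥ v)) volume t (t + T) := by
        apply ContinuousOn.intervalIntegrable; rw [huIcc]
        exact (contOn_dot (contOn_mulVec hΦc continuousOn_const)
          (contOn_mulVec hΦc continuousOn_const)).mono hIcc
      have hptw : ∀ τ ∈ Icc t (t + T), (Φ τ *ᵥ v) ⬝ᵥ (Φ τ *ᵥ v) ≤ 2 * g τ + 2 * ed τ := by
        intro τ hτ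
        have hsplit : Φ τ *ᵥ v = (Φ τ *ᵥ x τ) - (Φ τ *ᵥ (x τ - v)) := by
          rw [mulVec_sub, sub_sub_cancel]
        rw [hsplit]
        exact dot_sub_sq_le _ _
      have hr2ne : r2 ≠ 0 := ne_of_gt hr2pos
      have he0ne : e0 ≠ 0 := ne_of_gt he00
      have hDne : D ≠ 0 := ne_of_gt hD0
      have hlow : δ * r2 ≤ 2 * I + 2 * E := by
        have h1 : v ⬝ᵥ v = r2 := by rw [hr2_def, hv_def]
        have h2 : (∫ τ in t..(t + T), (Φ τ *ᵥ v) ⬝ᵥ (Φ τ *ᵥ v))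
            ≤ ∫ τ in t..(t + T), (2 * g τ + 2 * ed τ) :=
          intervalIntegral.integral_mono_on htT hwint
            ((hgint.const_mul 2).add (hedint.const_mul 2)) hptw
        have h3 : (∫ τ in t..(t + T), (2 * g τ + 2 * ed τ)) = 2 * I + 2 * E := by
          rw [intervalIntegral.integral_add (hgint.const_mul 2) (hedint.const_mul 2),
            intervalIntegral.integral_const_mul, intervalIntegral.integral_const_mul,
            hI_def, hE_def]
        rw [h1] at hPEt
        linarith only [hPEt, h2, h3]
      -- bound on J via the AM-GM trick
      set ε := Real.sqrt (e0 * r2) with hε_def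
      have hε0 : 0 < ε := Real.sqrt_pos.2 (by positivity)
      have hε2 : ε ^ 2 = e0 * r2 := Real.sq_sqrt (by positivity)
      have hJle : J ≤ (I / ε + ε * T) / 2 := by
        have hptw2 : ∀ s ∈ Icc t (t + T), Real.sqrt (g s) ≤ (g s / ε + ε) / 2 := by
          intro s _
          have hgs := hgnn s
          have hkey : (g s / ε + ε) / 2 - Real.sqrt (g s)
              = (Real.sqrt (g s) - ε) ^ 2 / (2 * ε) := by
            have h0 : (Real.sqrt (g s) - ε) ^ 2
                = g s - 2 * ε * Real.sqrt (g s) + ε ^ 2 := by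
              rw [sub_sq, Real.sq_sqrt hgs]; ring
            rw [h0]
            field_simp
            ring
          have h5 := div_nonneg (sq_nonneg (Real.sqrt (g s) - ε))
            (by positivity : (0:ℝ) ≤ 2 * ε)
          linarith only [hkey, h5]
        have h2 : J ≤ ∫ s in t..(t + T), (g s / ε + ε) / 2 := by
          refine intervalIntegral.integral_mono_on htT hsqint ?_ hptw2
          exact ((hgint.div_const ε).add intervalIntegrable_const).div_const 2
        have h3 : (∫ s in t..(t + T), (g s / ε + ε) / 2) = (I / ε + ε * T) / 2 := by
          have heq : (fun s => (g s / ε + ε) / 2) = fun s => (1 / (2 * ε)) * g s + ε / 2 := by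
            funext s; field_simp
          rw [heq, intervalIntegral.integral_add (hgint.const_mul _) intervalIntegrable_const,
            intervalIntegral.integral_const_mul, intervalIntegral.integral_const, smul_eq_mul,
            hI_def]
          field_simp
          ring
        linarith only [h2, h3]
      -- arithmetic combination
      have hIsq : I ^ 2 / ε ^ 2 ≤ G * I / e0 := by
        have h1 : I ^ 2 ≤ G * r2 * I := by
          have h0 := mul_le_mul_of_nonneg_right hIle hI0
          rw [sq]; exact h0
        have hpos : (0:ℝ) < e0 * r2 := by positivity
        have h2 : I ^ 2 / (e0 * r2) ≤ (G * r2 * I) / (e0 * r2) := by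
          rw [div_eq_mul_inv, div_eq_mul_inv]
          exact mul_le_mul_of_nonneg_right h1 (inv_pos.2 hpos).le
        have h3 : (G * r2 * I) / (e0 * r2) = G * I / e0 := by
          field_simp
        rw [hε2]
        calc I ^ 2 / (e0 * r2) ≤ (G * r2 * I) / (e0 * r2) := h2
          _ = G * I / e0 := h3
      have hJsq : J ^ 2 ≤ (I ^ 2 / ε ^ 2 + ε ^ 2 * T ^ 2) / 2 := by
        have h1 : J ^ 2 ≤ ((I / ε + ε * T) / 2) ^ 2 := by
          rw [sq, sq]; exact mul_self_le_mul_self hJ0 hJle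
        have h3 : ((I / ε + ε * T) / 2) ^ 2
            = ((I / ε) ^ 2 + 2 * (I / ε) * (ε * T) + (ε * T) ^ 2) / 4 := by ring
        have h4 : (I / ε) ^ 2 = I ^ 2 / ε ^ 2 := by rw [div_pow]
        have h5 : (ε * T) ^ 2 = ε ^ 2 * T ^ 2 := by ring
        rw [h3, h4, h5] at h1
        have h2 : 2 * (I / ε) * (ε * T) ≤ I ^ 2 / ε ^ 2 + ε ^ 2 * T ^ 2 := by
          nlinarith only [sq_nonneg (I / ε - ε * T), h4, h5]
        linarith only [h1, h2]
      have hEfin : E ≤ (C * G / e0) * I / 2 + δ * r2 / 4 := by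
        have h1 : E ≤ C * ((I ^ 2 / ε ^ 2 + ε ^ 2 * T ^ 2) / 2) :=
          le_trans hEle (mul_le_mul_of_nonneg_left hJsq hC0.le)
        have h3 : ε ^ 2 * T ^ 2 = e0 * r2 * T ^ 2 := by rw [hε2]
        have h4 : C * (e0 * r2 * T ^ 2) / 2 = δ * r2 / 4 := by rw [← he0']; ring
        have h5 := mul_le_mul_of_nonneg_left hIsq hC0.le
        calc E ≤ C * ((I ^ 2 / ε ^ 2 + ε ^ 2 * T ^ 2) / 2) := h1
          _ = C * (I ^ 2 / ε ^ 2) / 2 + C * (ε ^ 2 * T ^ 2) / 2 := by ring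
          _ ≤ C * (G * I / e0) / 2 + C * (ε ^ 2 * T ^ 2) / 2 := by linarith only [h5]
          _ = (C * G / e0) * I / 2 + C * (e0 * r2 * T ^ 2) / 2 := by rw [h3]; ring
          _ = (C * G / e0) * I / 2 + δ * r2 / 4 := by rw [h4]
      have hDI : δ * r2 / 2 ≤ D * I := by
        have h5 : D * I = 2 * I + (C * G / e0) * I := by rw [hD_def]; ring
        linarith only [hlow, hEfin, h5, hE0]
      have hI_lb : δ * r2 / (2 * D) ≤ I := by
        rw [div_le_iff₀ (by positivity : (0:ℝ) < 2 * D)]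
        linarith only [hDI]
      -- conclude the contraction
      have h6 : (∫ τ in t..(t + T), -(2 * γ) * g τ) = -(2 * γ) * I := by
        rw [intervalIntegral.integral_const_mul, hI_def]
      have hVT : V (t + T) = r2 - 2 * γ * I := by
        have h7 := hFTC t ht
        rw [h6] at h7
        linarith only [h7, hr2_def]
      have h7 : (1 - cc) ≤ ρ := by rw [hρ_def]; exact le_max_left _ _
      have h8 : cc * r2 ≤ 2 * γ * I := by
        have h9 : cc * r2 = 2 * γ * (δ * r2 / (2 * D)) := by
          rw [hcc_def]; field_simp
        rw [h9]
        exact mul_le_mul_of_nonneg_left hI_lb (by positivity)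
      have h10 : (1 - cc) * r2 ≤ ρ * r2 := mul_le_mul_of_nonneg_right h7 hr2pos.le
      linarith only [hVT, h8, h10]
  -- iterate the contraction
  have hiter : ∀ n : ℕ, V ((n : ℝ) * T) ≤ ρ ^ n * V 0 := by
    intro n
    induction n with
    | zero => simp
    | succ n ih =>
      have hcast : (((n : ℕ) + 1 : ℕ) : ℝ) * T = (n : ℝ) * T + T := by push_cast; ring
      rw [hcast]
      calc V ((n : ℝ) * T + T) ≤ ρ * V ((n : ℝ) * T) :=
            hcontract _ (by positivity)
        _ ≤ ρ * (ρ ^ n * V 0) := mul_le_mul_of_nonneg_left ih hρ0.le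
        _ = ρ ^ (n + 1) * V 0 := by ring
  -- conclusion
  set lam : ℝ := -Real.log ρ / (2 * T) with hlam_def
  have hlogρ : Real.log ρ < 0 := Real.log_neg hρ0 hρ1
  have hlam0 : 0 < lam := by
    rw [hlam_def]
    have h2T : 0 < 2 * T := by linarith
    exact div_pos (by linarith) h2T
  set k : ℝ := Real.sqrt ((q : ℝ) / ρ) with hk_def
  have hqρ : 1 ≤ (q : ℝ) / ρ := by
    have hq1 : (1:ℝ) ≤ (q : ℝ) := by exact_mod_cast hq
    rw [le_div_iff₀ hρ0]; linarith
  have hk1 : 1 ≤ k := by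
    rw [hk_def, show (1:ℝ) = Real.sqrt 1 by simp]
    exact Real.sqrt_le_sqrt hqρ
  clear_value lam k
  refine ⟨k, lam, hk1, hlam0, fun t ht => ?_⟩
  set n : ℕ := ⌊t / T⌋₊ with hn_def
  clear_value n
  have h1 : (n : ℝ) ≤ t / T := by
    rw [hn_def]; exact_mod_cast Nat.floor_le (div_nonneg ht hT.le)
  have hn1 : (n : ℝ) * T ≤ t := by
    calc (n : ℝ) * T ≤ (t / T) * T := mul_le_mul_of_nonneg_right h1 hT.le
    _ = t := by field_simp
  have hn2 : t / T < (n : ℝ) + 1 := by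
    rw [hn_def]; exact_mod_cast Nat.lt_floor_add_one (t / T)
  have hnT0 : (0:ℝ) ≤ (n : ℝ) * T := by positivity
  have hVt : V t ≤ ρ ^ n * V 0 := le_trans (hVanti hnT0 (le_trans hnT0 hn1 : (0:ℝ) ≤ t) hn1)
    (hiter n)
  have hpow : ρ ^ n = Real.exp ((n : ℝ) * Real.log ρ) := by
    rw [← Real.log_pow, Real.exp_log (pow_pos hρ0 n)]
  have hmono : (n : ℝ) * Real.log ρ ≤ (t / T - 1) * Real.log ρ := by
    nlinarith [mul_pos (by linarith : (0:ℝ) < (n : ℝ) + 1 - t / T)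
      (by linarith : (0:ℝ) < -Real.log ρ)]
  have heq : (n : ℝ) * Real.log ρ ≤ -(2 * lam) * t + (- Real.log ρ) := by
    have heq2 : -(2 * lam) * t = (t / T) * Real.log ρ := by
      rw [hlam_def]; field_simp
    linarith
  have hpow2 : ρ ^ n ≤ Real.exp (-(2 * lam) * t) * ρ⁻¹ := by
    rw [hpow, ← Real.exp_log hρ0, ← Real.exp_neg, ← Real.exp_add, Real.exp_log hρ0]
    exact Real.exp_le_exp.2 heq
  have hV0 : V 0 ≤ (q : ℝ) * ‖x 0‖ ^ 2 := dot_le_card_norm_sq _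
  have hxt : ‖x t‖ ^ 2 ≤ V t := norm_sq_le_dot _
  have hR0 : 0 ≤ k * Real.exp (-lam * t) * ‖x 0‖ := by positivity
  have hRsq : (k * Real.exp (-lam * t) * ‖x 0‖) ^ 2
      = Real.exp (-(2 * lam) * t) * ρ⁻¹ * ((q : ℝ) * ‖x 0‖ ^ 2) := by
    have hk2 : k ^ 2 = (q : ℝ) / ρ := by
      rw [hk_def]; exact Real.sq_sqrt (by positivity)
    have hexp2 : Real.exp (-lam * t) ^ 2 = Real.exp (-(2 * lam) * t) := by
      rw [sq, ← Real.exp_add]; ring_nf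
    calc (k * Real.exp (-lam * t) * ‖x 0‖) ^ 2
        = k ^ 2 * Real.exp (-lam * t) ^ 2 * ‖x 0‖ ^ 2 := by ring
      _ = (q : ℝ) / ρ * Real.exp (-(2 * lam) * t) * ‖x 0‖ ^ 2 := by rw [hk2, hexp2]
      _ = Real.exp (-(2 * lam) * t) * ρ⁻¹ * ((q : ℝ) * ‖x 0‖ ^ 2) := by
          field_simp
  have hfinsq : ‖x t‖ ^ 2 ≤ (k * Real.exp (-lam * t) * ‖x 0‖) ^ 2 := by
    rw [hRsq]
    calc ‖x t‖ ^ 2 ≤ V t := hxt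
      _ ≤ ρ ^ n * V 0 := hVt
      _ ≤ (Real.exp (-(2 * lam) * t) * ρ⁻¹) * V 0 :=
          mul_le_mul_of_nonneg_right hpow2 (hVnn 0)
      _ ≤ (Real.exp (-(2 * lam) * t) * ρ⁻¹) * ((q : ℝ) * ‖x 0‖ ^ 2) := by
          refine mul_le_mul_of_nonneg_left hV0 ?_
          positivity
      _ = Real.exp (-(2 * lam) * t) * ρ⁻¹ * ((q : ℝ) * ‖x 0‖ ^ 2) := by ring
  calc ‖x t‖ = Real.sqrt (‖x t‖ ^ 2) := (Real.sqrt_sq (norm_nonneg _)).symm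
    _ ≤ Real.sqrt ((k * Real.exp (-lam * t) * ‖x 0‖) ^ 2) := Real.sqrt_le_sqrt hfinsq
    _ = k * Real.exp (-lam * t) * ‖x 0‖ := Real.sqrt_sq hR0
end

section
/- Let R ∈ ℝ and a > 0. Let λ, y, u, v₁, v₂, φ : [0,∞) → ℝ be differentiable (y, u continuous) and satisfy λ'(t) = −R y(t) + u(t), v₁'(t) = −a v₁(t) + a u(t), v₂'(t) = −a v₂(t) + a λ(t), φ'(t) = −a φ(t) + a y(t) for all t ≥ 0. Define Y_R(t) := −v₁(t) + a λ(t) − a v₂(t). Then Y_R(t) + R φ(t) = (Y_R(0) + R φ(0)) e^{−a t} for all t ≥ 0; in particular Y_R(t) = −R φ(t) + ε_t with ε_t exponentially decaying, i.e. (Y_R, −φ) is a linear regression for the unknown resistance R up to an exponentially decaying residual. -/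
/-- Filtered linear regression for the unknown resistance in the MagLev adaptive
observer: with `λ' = −R y + u` and first-order filters `v₁, v₂, φ` of `u, λ, y`,
the signal `Y_R := −v₁ + aλ − a v₂` satisfies `Y_R + R φ = (Y_R(0) + R φ(0)) e^{−at}`. -/
theorem stmt_17 (R a : ℝ) (ha : 0 < a)
    (lam y u v₁ v₂ φ : ℝ → ℝ) (hy : Continuous y) (hu : Continuous u)
    (hlam : ∀ t : ℝ, 0 ≤ t → HasDerivAt lam (-R * y t + u t) t)
    (hv₁ : ∀ t : ℝ, 0 ≤ t → HasDerivAt v₁ (-a * v₁ t + a * u t) t)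
    (hv₂ : ∀ t : ℝ, 0 ≤ t → HasDerivAt v₂ (-a * v₂ t + a * lam t) t)
    (hφ : ∀ t : ℝ, 0 ≤ t → HasDerivAt φ (-a * φ t + a * y t) t)
    (Y_R : ℝ → ℝ) (hYR : ∀ t : ℝ, Y_R t = -v₁ t + a * lam t - a * v₂ t) :
    ∀ t : ℝ, 0 ≤ t →
      Y_R t + R * φ t = (Y_R 0 + R * φ 0) * Real.exp (-a * t) := by
  set g : ℝ → ℝ := fun t => Y_R t + R * φ t with hg
  have hYRf : Y_R = fun t => -v₁ t + a * lam t - a * v₂ t := funext hYR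
  have hgderiv : ∀ t : ℝ, 0 ≤ t → HasDerivAt g (-a * g t) t := by
    intro t ht
    have h1 := hv₁ t ht
    have h2 := hlam t ht
    have h3 := hv₂ t ht
    have h4 := hφ t ht
    have : HasDerivAt (fun s => -v₁ s + a * lam s - a * v₂ s + R * φ s)
        (-(-a * v₁ t + a * u t) + a * (-R * y t + u t) - a * (-a * v₂ t + a * lam t)
          + R * (-a * φ t + a * y t)) t := by
      exact (((h1.neg.add (h2.const_mul a)).sub (h3.const_mul a)).add (h4.const_mul R))
    have hgeq : g = fun s => -v₁ s + a * lam s - a * v₂ s + R * φ s := by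
      funext s; simp [hg, hYRf]
    rw [hgeq]
    convert this using 1
    simp [hg, hYRf]
    ring
  set h : ℝ → ℝ := fun t => g t * Real.exp (a * t) with hh
  have hhderiv : ∀ t : ℝ, 0 ≤ t → HasDerivAt h 0 t := by
    intro t ht
    have he : HasDerivAt (fun s => Real.exp (a * s)) (a * Real.exp (a * t)) t := by
      simpa [mul_comm, Function.comp_def] using (Real.hasDerivAt_exp (a * t)).comp t
        ((hasDerivAt_id t).const_mul a)
    have : HasDerivAt h (-a * g t * Real.exp (a * t) + g t * (a * Real.exp (a * t))) t :=
      (hgderiv t ht).mul he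
    convert this using 1
    ring
  intro t ht
  have hconst : h t = h 0 := by
    apply constant_of_has_deriv_right_zero (f := h) (a := 0) (b := t)
    · intro x hx
      exact ((hhderiv x hx.1).continuousAt).continuousWithinAt
    · intro x hx
      exact ((hhderiv x hx.1)).hasDerivWithinAt
    · exact Set.mem_Icc.mpr ⟨ht, le_refl t⟩
  have : g t * Real.exp (a * t) = g 0 := by
    simpa [hh] using hconst
  have hexp : Real.exp (a * t) ≠ 0 := Real.exp_ne_zero _
  have hneg : Real.exp (-a * t) = (Real.exp (a * t))⁻¹ := by
    rw [← Real.exp_neg]; ring_nf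
  calc g t = g 0 * (Real.exp (a * t))⁻¹ := by
        rw [eq_mul_inv_iff_mul_eq₀ hexp, this]
    _ = (Y_R 0 + R * φ 0) * Real.exp (-a * t) := by rw [hneg]
end

section
/- Let m, k, γ_p > 0 and G, c ∈ ℝ. Let q, p, λ, z : [0,∞) → ℝ be differentiable and satisfy q'(t) = p(t)/m, p'(t) = −mG + λ(t)²/(2k), and z'(t) = −(γ_p/(km)) z(t) + λ(t)²/(2k) + (γ_p²/(km)) (c − q(t))/k − mG for all t ≥ 0. Define the observation error e(t) := z(t) − γ_p (c − q(t))/k − p(t). Then e(t) = e(0) e^{−γ_p t/(km)} for all t ≥ 0; i.e. the momentum estimate x̂₃ := z − γ_p (c−q)/k converges to p exponentially with rate γ_p/(km). -/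
/-- Nominal convergence of the KKL momentum observer for the 1-dof MagLev ball:
the error `e = z − γ_p (c−q)/k − p` decays exponentially with rate `γ_p/(km)`. -/
theorem stmt_18 (m k γp : ℝ) (hm : 0 < m) (hk : 0 < k) (hγp : 0 < γp)
    (G c : ℝ) (q p lam z : ℝ → ℝ)
    (hq : ∀ t : ℝ, 0 ≤ t → HasDerivAt q (p t / m) t)
    (hp : ∀ t : ℝ, 0 ≤ t → HasDerivAt p (-(m * G) + (lam t)^2 / (2 * k)) t)
    (hz : ∀ t : ℝ, 0 ≤ t → HasDerivAt z
      (-(γp / (k * m)) * z t + (lam t)^2 / (2 * k) + (γp^2 / (k * m)) * ((c - q t) / k)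
        - m * G) t)
    (e : ℝ → ℝ) (he : ∀ t : ℝ, e t = z t - γp * ((c - q t) / k) - p t) :
    ∀ t : ℝ, 0 ≤ t → e t = e 0 * Real.exp (-(γp / (k * m)) * t) := by
  set a : ℝ := γp / (k * m) with ha
  have hkm : k * m ≠ 0 := by positivity
  have hkne : k ≠ 0 := ne_of_gt hk
  -- e has derivative -a * e t at each t ≥ 0
  have hde : ∀ t : ℝ, 0 ≤ t → HasDerivAt e (-a * e t) t := by
    intro t ht
    have h1 : HasDerivAt (fun s => z s - γp * ((c - q s) / k) - p s)
        ((-a * z t + (lam t)^2 / (2 * k) + (γp^2 / (k * m)) * ((c - q t) / k) - m * G)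
          - γp * ((0 - p t / m) / k) - (-(m * G) + (lam t)^2 / (2 * k))) t := by
      exact (((hz t ht).sub ((((hasDerivAt_const t c).sub (hq t ht)).div_const k).const_mul γp)).sub
        (hp t ht))
    have h2 : HasDerivAt e
        ((-a * z t + (lam t)^2 / (2 * k) + (γp^2 / (k * m)) * ((c - q t) / k) - m * G)
          - γp * ((0 - p t / m) / k) - (-(m * G) + (lam t)^2 / (2 * k))) t := by
      have : e = fun s => z s - γp * ((c - q s) / k) - p s := funext he
      rw [this]; exact h1
    convert h2 using 1
    rw [he t, ha]
    field_simp
    ring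
  -- g t = e t * exp (a t) is constant on [0, ∞)
  have key : ∀ t : ℝ, 0 ≤ t → e t * Real.exp (a * t) = e 0 := by
    intro t ht
    have hcont : ContinuousOn (fun s => e s * Real.exp (a * s)) (Set.Icc 0 t) := by
      apply ContinuousOn.mul
      · intro s hs
        exact ((hde s hs.1).continuousAt).continuousWithinAt
      · exact (Real.continuous_exp.comp (continuous_const.mul continuous_id)).continuousOn
    have hderiv : ∀ s ∈ Set.Ico (0:ℝ) t,
        HasDerivWithinAt (fun s => e s * Real.exp (a * s)) 0 (Set.Ici s) s := by
      intro s hs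
      have hexp : HasDerivAt (fun s => Real.exp (a * s)) (a * Real.exp (a * s)) s := by
        have := ((hasDerivAt_id s).const_mul a).exp
        simpa [mul_comm] using this
      have := (hde s hs.1).mul hexp
      have h0 : -a * e s * Real.exp (a * s) + e s * (a * Real.exp (a * s)) = 0 := by ring
      rw [h0] at this
      exact this.hasDerivWithinAt
    have := constant_of_has_deriv_right_zero hcont hderiv t (Set.right_mem_Icc.mpr ht)
    simpa using this
  intro t ht
  have h := key t ht
  have hexp : Real.exp (a * t) ≠ 0 := Real.exp_ne_zero _
  have : e t = e 0 / Real.exp (a * t) := by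
    field_simp [hexp] at h ⊢; linarith [h]
  rw [this, neg_mul, Real.exp_neg, div_eq_mul_inv]
end
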